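/- arXiv:math/9906021 — 6 statements merged into one kernel-verified Lean document; each statement's English description precedes it below -/
import Mathlib

section
/- For every α ∈ [0,1] there exists a constant C₁ > 0 depending only on α such that for every finite Borel measure μ on ℝ and every E ∈ ℝ, D^α μ(E) ≤ C₁ · limsup_{ε→0⁺} ε^{1−α} ∫_ℝ ε/((t−E)² + ε²) dμ(t), as an inequality in [0,∞]. -/
open MeasureTheory Filter Set
open scoped ENNReal

/-- For every `α ∈ [0,1]` there is a constant `C₁ > 0` depending only on `α`
such that for every finite Borel measure `μ` on `ℝ` and every `E ∈ ℝ`,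
`D^α μ(E) ≤ C₁ · limsup_{ε→0⁺} ε^{1−α} ∫ ε/((t−E)² + ε²) dμ(t)`, as an inequality in `[0,∞]`.
Here `D^α μ(E) = limsup_{δ→0⁺} μ((E−δ,E+δ))/δ^α`. -/
theorem upper_alpha_derivative_le_borel_transform_limsup
    (α : ℝ) (hα : α ∈ Icc (0 : ℝ) 1) :
    ∃ C₁ : ℝ, 0 < C₁ ∧
      ∀ (μ : Measure ℝ), IsFiniteMeasure μ → ∀ E : ℝ,
        limsup (fun δ : ℝ => μ (Ioo (E - δ) (E + δ)) / ENNReal.ofReal (δ ^ α))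
            (nhdsWithin 0 (Ioi 0)) ≤
          ENNReal.ofReal C₁ *
            limsup (fun ε : ℝ =>
                ENNReal.ofReal (ε ^ (1 - α)) *
                  ∫⁻ t, ENNReal.ofReal (ε / ((t - E) ^ 2 + ε ^ 2)) ∂μ)
              (nhdsWithin 0 (Ioi 0)) := by
  refine ⟨2, by norm_num, fun μ _ E => ?_⟩
  set g : ℝ → ℝ≥0∞ := fun ε =>
    ENNReal.ofReal (ε ^ (1 - α)) * ∫⁻ t, ENNReal.ofReal (ε / ((t - E) ^ 2 + ε ^ 2)) ∂μ
  have key : ∀ δ : ℝ, 0 < δ →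
      μ (Ioo (E - δ) (E + δ)) / ENNReal.ofReal (δ ^ α) ≤ ENNReal.ofReal 2 * g δ := by
    intro δ hδ
    set S := Ioo (E - δ) (E + δ)
    -- integral lower bound
    have hint : ENNReal.ofReal (1 / (2 * δ)) * μ S ≤
        ∫⁻ t, ENNReal.ofReal (δ / ((t - E) ^ 2 + δ ^ 2)) ∂μ := by
      rw [← lintegral_indicator_const measurableSet_Ioo]
      refine lintegral_mono fun t => ?_
      by_cases ht : t ∈ S
      · rw [Set.indicator_of_mem ht]
        refine ENNReal.ofReal_le_ofReal ?_
        have h1 : (t - E) ^ 2 < δ ^ 2 := by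
          have := ht.1; have := ht.2
          nlinarith [ht.1, ht.2]
        have hden : 0 < (t - E) ^ 2 + δ ^ 2 := by positivity
        rw [div_le_div_iff₀ (by positivity) hden]
        nlinarith
      · rw [Set.indicator_of_notMem ht]; exact zero_le
    have hpowpos : 0 < δ ^ α := Real.rpow_pos_of_pos hδ α
    have h1 : μ S / ENNReal.ofReal (δ ^ α) = ENNReal.ofReal (δ ^ (-α)) * μ S := by
      rw [div_eq_mul_inv, ← ENNReal.ofReal_inv_of_pos hpowpos, mul_comm,
        Real.rpow_neg hδ.le]
    have h2 : (δ : ℝ) ^ (-α) = 2 * δ ^ (1 - α) * (1 / (2 * δ)) := by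
      have : δ ^ (1 - α) = δ * δ ^ (-α) := by
        rw [show (1 : ℝ) - α = 1 + (-α) by ring, Real.rpow_add hδ, Real.rpow_one]
      rw [this]; field_simp
    calc μ S / ENNReal.ofReal (δ ^ α)
        = ENNReal.ofReal (δ ^ (-α)) * μ S := h1
      _ = ENNReal.ofReal 2 * (ENNReal.ofReal (δ ^ (1 - α)) *
            (ENNReal.ofReal (1 / (2 * δ)) * μ S)) := by
          rw [← mul_assoc, ← mul_assoc, ← ENNReal.ofReal_mul (by norm_num),
            ← ENNReal.ofReal_mul (by positivity), ← h2]
      _ ≤ ENNReal.ofReal 2 * g δ := by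
          refine mul_le_mul_right (mul_le_mul_right hint _) _
  have hev : ∀ᶠ δ in nhdsWithin (0:ℝ) (Ioi 0),
      μ (Ioo (E - δ) (E + δ)) / ENNReal.ofReal (δ ^ α) ≤ ENNReal.ofReal 2 * g δ :=
    eventually_nhdsWithin_of_forall fun δ hδ => key δ hδ
  calc limsup (fun δ : ℝ => μ (Ioo (E - δ) (E + δ)) / ENNReal.ofReal (δ ^ α))
        (nhdsWithin 0 (Ioi 0))
      ≤ limsup (fun δ => ENNReal.ofReal 2 * g δ) (nhdsWithin 0 (Ioi 0)) :=
        limsup_le_limsup hev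
    _ = ENNReal.ofReal 2 * limsup g (nhdsWithin 0 (Ioi 0)) :=
        ENNReal.limsup_const_mul_of_ne_top ENNReal.ofReal_ne_top
end

section
/- For every α ∈ [0,1] there exists a constant C₂ > 0 depending only on α such that for every finite Borel measure μ on ℝ and every E ∈ ℝ, limsup_{ε→0⁺} ε^{1−α} ∫_ℝ ε/((t−E)² + ε²) dμ(t) ≤ C₂ · D^α μ(E), as an inequality in [0,∞]. -/
open MeasureTheory Filter Set ENNReal

lemma aux_key_bound (α : ℝ) (hα0 : 0 ≤ α) (hα1 : α ≤ 1) (μ : Measure ℝ) [IsFiniteMeasure μ]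
    (E : ℝ) (L : ℝ≥0∞) (u : ℝ) (hu : 0 < u)
    (hL : ∀ r ∈ Ioo (0:ℝ) u, μ (Ioo (E - r) (E + r)) ≤ L * ENNReal.ofReal (r ^ α))
    (ε : ℝ) (hε : 0 < ε) :
    ENNReal.ofReal (ε ^ (1 - α)) * ∫⁻ t, ENNReal.ofReal (ε / ((t - E) ^ 2 + ε ^ 2)) ∂μ ≤
      ENNReal.ofReal (ε ^ ((2:ℝ) - α) / u ^ 2) * μ univ
        + L * ENNReal.ofReal (1 / (1 - α / 2)) := by
  have h2α : (0:ℝ) < 1 - α / 2 := by linarith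
  set K : ℝ → ℝ := fun t => ε / ((t - E) ^ 2 + ε ^ 2) with hKdef
  have hden : ∀ t : ℝ, 0 < (t - E) ^ 2 + ε ^ 2 := fun t => by positivity
  have hK_nn : 0 ≤ᵐ[μ] K := ae_of_all _ fun t => div_nonneg hε.le (hden t).le
  have hKcont : Continuous K := continuous_const.div (by fun_prop) fun t => (hden t).ne'
  have hlayer : ∫⁻ t, ENNReal.ofReal (ε / ((t - E) ^ 2 + ε ^ 2)) ∂μ
      = ∫⁻ s in Ioi (0:ℝ), μ {t | s < K t} :=
    lintegral_eq_lintegral_meas_lt μ hK_nn hKcont.aemeasurable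
  set s₀ : ℝ := ε / u ^ 2 with hs₀def
  set b : ℝ := 1 / ε with hbdef
  have hs₀ : 0 < s₀ := by positivity
  have hb : 0 < b := by positivity
  -- split the s-integral
  have hsplit : ∫⁻ s in Ioi (0:ℝ), μ {t | s < K t}
      ≤ (∫⁻ s in Ioc (0:ℝ) s₀, μ {t | s < K t})
        + (∫⁻ s in Ioo s₀ b, μ {t | s < K t})
        + (∫⁻ s in Ici b, μ {t | s < K t}) := by
    have hsub : Ioi (0:ℝ) ⊆ (Ioc (0:ℝ) s₀ ∪ Ioo s₀ b) ∪ Ici b := by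
      intro s hs
      rcases le_or_gt s s₀ with h | h
      · exact Or.inl (Or.inl ⟨hs, h⟩)
      rcases lt_or_ge s b with h2 | h2
      · exact Or.inl (Or.inr ⟨h, h2⟩)
      · exact Or.inr h2
    calc ∫⁻ s in Ioi (0:ℝ), μ {t | s < K t}
        ≤ ∫⁻ s in (Ioc (0:ℝ) s₀ ∪ Ioo s₀ b) ∪ Ici b, μ {t | s < K t} :=
          lintegral_mono_set hsub
      _ ≤ (∫⁻ s in Ioc (0:ℝ) s₀ ∪ Ioo s₀ b, μ {t | s < K t})
            + ∫⁻ s in Ici b, μ {t | s < K t} := lintegral_union_le _ _ _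
      _ ≤ _ := add_le_add (lintegral_union_le _ _ _) le_rfl
  -- piece 1
  have hp1 : ∫⁻ s in Ioc (0:ℝ) s₀, μ {t | s < K t} ≤ ENNReal.ofReal s₀ * μ univ := by
    calc ∫⁻ s in Ioc (0:ℝ) s₀, μ {t | s < K t}
        ≤ ∫⁻ _ in Ioc (0:ℝ) s₀, μ univ :=
          lintegral_mono fun s => measure_mono (subset_univ _)
      _ = μ univ * volume (Ioc (0:ℝ) s₀) := setLIntegral_const _ _
      _ = ENNReal.ofReal s₀ * μ univ := by
          rw [Real.volume_Ioc, sub_zero, mul_comm]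
  -- piece 3 vanishes
  have hp3 : ∫⁻ s in Ici b, μ {t | s < K t} = 0 := by
    have hzero : ∀ s ∈ Ici b, μ {t | s < K t} = (fun _ : ℝ => (0:ℝ≥0∞)) s := by
      intro s hs
      have hempty : {t | s < K t} = (∅ : Set ℝ) := by
        apply eq_empty_iff_forall_notMem.2
        intro t ht
        have h1 : K t ≤ b := by
          have h2 : ε / ((t - E) ^ 2 + ε ^ 2) ≤ ε / ε ^ 2 := by
            gcongr <;> first
              | positivity
              | exact le_add_of_nonneg_left (sq_nonneg _)
          have h3 : ε / ε ^ 2 = b := by rw [hbdef, sq]; field_simp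
          simpa [hKdef, h3] using h2
        exact absurd (lt_of_le_of_lt hs ht) (not_lt.2 h1)
      simp [hempty]
    have hle : ∫⁻ s in Ici b, μ {t | s < K t} ≤ ∫⁻ _ in Ici b, (0:ℝ≥0∞) :=
      setLIntegral_mono measurable_const fun s hs => (hzero s hs).le
    simpa using hle
  -- piece 2
  have hp2 : ∫⁻ s in Ioo s₀ b, μ {t | s < K t}
      ≤ L * ∫⁻ s in Ioo (0:ℝ) b, ENNReal.ofReal ((ε / s) ^ (α / 2)) := by
    have hpt : ∀ s ∈ Ioo s₀ b, μ {t | s < K t} ≤ L * ENNReal.ofReal ((ε / s) ^ (α / 2)) := by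
      intro s hs
      have hs0 : 0 < s := hs₀.trans hs.1
      set r : ℝ := Real.sqrt (ε / s) with hrdef
      have hr0 : 0 < r := Real.sqrt_pos.2 (div_pos hε hs0)
      have hru : r < u := by
        have h1 : ε / s < u ^ 2 := by
          have h2 : ε < s * u ^ 2 := by
            have := (div_lt_iff₀ (by positivity : (0:ℝ) < u ^ 2)).1 hs.1
            linarith
          rw [div_lt_iff₀ hs0]; linarith
        calc r < Real.sqrt (u ^ 2) := Real.sqrt_lt_sqrt (by positivity) h1
          _ = u := Real.sqrt_sq hu.le
      have hsubset : {t | s < K t} ⊆ Ioo (E - r) (E + r) := by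
        intro t ht
        have ht' : s < ε / ((t - E) ^ 2 + ε ^ 2) := ht
        have h2 : s * ((t - E) ^ 2 + ε ^ 2) < ε := (lt_div_iff₀ (hden t)).1 ht'
        have h3 : (t - E) ^ 2 < ε / s := by
          rw [lt_div_iff₀ hs0]
          nlinarith [sq_nonneg ε, hε, hs0]
        have h4 : |t - E| < r := by
          rw [← Real.sqrt_sq_eq_abs]
          exact Real.sqrt_lt_sqrt (sq_nonneg _) h3
        obtain ⟨h5, h6⟩ := abs_lt.1 h4
        exact ⟨by linarith, by linarith⟩
      have hrα : r ^ α = (ε / s) ^ (α / 2) := by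
        rw [hrdef, Real.sqrt_eq_rpow, ← Real.rpow_mul (div_nonneg hε.le hs0.le)]
        congr 1; ring
      calc μ {t | s < K t} ≤ μ (Ioo (E - r) (E + r)) := measure_mono hsubset
        _ ≤ L * ENNReal.ofReal (r ^ α) := hL r ⟨hr0, hru⟩
        _ = L * ENNReal.ofReal ((ε / s) ^ (α / 2)) := by rw [hrα]
    calc ∫⁻ s in Ioo s₀ b, μ {t | s < K t}
        ≤ ∫⁻ s in Ioo s₀ b, L * ENNReal.ofReal ((ε / s) ^ (α / 2)) :=
          setLIntegral_mono (by fun_prop) hpt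
      _ ≤ ∫⁻ s in Ioo (0:ℝ) b, L * ENNReal.ofReal ((ε / s) ^ (α / 2)) :=
          lintegral_mono_set (Ioo_subset_Ioo hs₀.le le_rfl)
      _ = L * ∫⁻ s in Ioo (0:ℝ) b, ENNReal.ofReal ((ε / s) ^ (α / 2)) :=
          lintegral_const_mul L (by fun_prop)
  -- compute the s-integral
  have hexp : (-1:ℝ) < -(α/2) := by linarith
  have hIntOn : IntegrableOn (fun s : ℝ => ε ^ (α/2) * s ^ (-(α/2))) (Ioo 0 b) volume := by
    have h1 : IntervalIntegrable (fun s : ℝ => s ^ (-(α/2))) volume 0 b :=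
      intervalIntegral.intervalIntegrable_rpow' hexp
    have h2 : IntegrableOn (fun s : ℝ => s ^ (-(α/2))) (Ioc 0 b) volume :=
      (intervalIntegrable_iff_integrableOn_Ioc_of_le hb.le).1 h1
    exact (h2.mono_set Ioo_subset_Ioc_self).const_mul _
  have hJ : ∫⁻ s in Ioo (0:ℝ) b, ENNReal.ofReal ((ε / s) ^ (α / 2))
      = ENNReal.ofReal (ε ^ (α/2) * (b ^ (1 - α/2) / (1 - α/2))) := by
    have hcongr : ∫⁻ s in Ioo (0:ℝ) b, ENNReal.ofReal ((ε / s) ^ (α / 2))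
        = ∫⁻ s in Ioo (0:ℝ) b, ENNReal.ofReal (ε ^ (α/2) * s ^ (-(α/2))) := by
      refine setLIntegral_congr_fun measurableSet_Ioo (fun s hs => ?_)
      rw [Real.div_rpow hε.le hs.1.le, Real.rpow_neg hs.1.le, div_eq_mul_inv]
    rw [hcongr]
    rw [← ofReal_integral_eq_lintegral_ofReal hIntOn]
    · congr 1
      rw [MeasureTheory.integral_const_mul]
      congr 1
      rw [← integral_Ioc_eq_integral_Ioo, ← intervalIntegral.integral_of_le hb.le,
        integral_rpow (Or.inl hexp)]
      rw [Real.zero_rpow (by linarith : -(α/2) + 1 ≠ 0)]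
      rw [show -(α/2) + 1 = 1 - α/2 by ring]
      ring
    · refine (ae_restrict_iff' measurableSet_Ioo).2 (ae_of_all _ fun s hs => ?_)
      have := hs.1
      positivity
  -- assemble
  have hmain : ENNReal.ofReal (ε ^ (1 - α)) * ∫⁻ t, ENNReal.ofReal (ε / ((t - E) ^ 2 + ε ^ 2)) ∂μ
      ≤ ENNReal.ofReal (ε ^ (1 - α)) * (ENNReal.ofReal s₀ * μ univ
          + L * ENNReal.ofReal (ε ^ (α/2) * (b ^ (1 - α/2) / (1 - α/2)))) := by
    apply mul_le_mul_right
    rw [hlayer]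
    calc ∫⁻ s in Ioi (0:ℝ), μ {t | s < K t}
        ≤ _ := hsplit
      _ ≤ ENNReal.ofReal s₀ * μ univ
            + L * ENNReal.ofReal (ε ^ (α/2) * (b ^ (1 - α/2) / (1 - α/2))) := by
          rw [hp3, add_zero]
          exact add_le_add hp1 (hp2.trans_eq (by rw [hJ]))
  refine hmain.trans (le_of_eq ?_)
  rw [mul_add]
  congr 1
  · rw [← mul_assoc, ← ENNReal.ofReal_mul (Real.rpow_nonneg hε.le _)]
    congr 2
    rw [hs₀def, show (2:ℝ) - α = (1 - α) + 1 by ring, Real.rpow_add hε, Real.rpow_one]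
    ring
  · rw [← mul_assoc, mul_comm (ENNReal.ofReal (ε ^ (1 - α))) L, mul_assoc,
      ← ENNReal.ofReal_mul (Real.rpow_nonneg hε.le _)]
    congr 2
    have h1 : ε ^ (1-α) * ε ^ (α/2) = ε ^ (1 - α/2) := by
      rw [← Real.rpow_add hε]; congr 1; ring
    calc ε ^ (1-α) * (ε ^ (α/2) * (b ^ (1 - α/2) / (1 - α/2)))
        = (ε ^ (1-α) * ε ^ (α/2)) * b ^ (1 - α/2) / (1 - α/2) := by ring
      _ = (ε ^ (1 - α/2) * (ε ^ (1 - α/2))⁻¹) / (1 - α/2) := by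
          rw [h1, hbdef, one_div, Real.inv_rpow hε.le]
      _ = 1 / (1 - α/2) := by
          rw [mul_inv_cancel₀ (Real.rpow_pos_of_pos hε _).ne']

/-- For every `α ∈ [0,1]` there is a constant `C₂ > 0` depending only on `α`
such that for every finite Borel measure `μ` on `ℝ` and every `E ∈ ℝ`,
`limsup_{ε→0⁺} ε^{1−α} ∫ ε/((t−E)² + ε²) dμ(t) ≤ C₂ · D^α μ(E)`, as an inequality in `[0,∞]`.
Here `D^α μ(E) = limsup_{δ→0⁺} μ((E−δ,E+δ))/δ^α`. -/
theorem borel_transform_limsup_le_upper_alpha_derivative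
    (α : ℝ) (hα : α ∈ Icc (0 : ℝ) 1) :
    ∃ C₂ : ℝ, 0 < C₂ ∧
      ∀ (μ : Measure ℝ), IsFiniteMeasure μ → ∀ E : ℝ,
        limsup (fun ε : ℝ =>
            ENNReal.ofReal (ε ^ (1 - α)) *
              ∫⁻ t, ENNReal.ofReal (ε / ((t - E) ^ 2 + ε ^ 2)) ∂μ)
          (nhdsWithin 0 (Ioi 0)) ≤
        ENNReal.ofReal C₂ *
          limsup (fun δ : ℝ => μ (Ioo (E - δ) (E + δ)) / ENNReal.ofReal (δ ^ α))
            (nhdsWithin 0 (Ioi 0)) := by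
  obtain ⟨hα0, hα1⟩ := hα
  have h2α : (0:ℝ) < 1 - α / 2 := by linarith
  refine ⟨2, two_pos, ?_⟩
  intro μ hfin E
  set l := nhdsWithin (0:ℝ) (Ioi 0) with hl
  set D := limsup (fun δ : ℝ => μ (Ioo (E - δ) (E + δ)) / ENNReal.ofReal (δ ^ α)) l with hD
  set F := fun ε : ℝ =>
      ENNReal.ofReal (ε ^ (1 - α)) *
        ∫⁻ t, ENNReal.ofReal (ε / ((t - E) ^ 2 + ε ^ 2)) ∂μ with hF
  by_cases hDtop : D = ⊤
  · rw [hDtop, ENNReal.mul_top (by norm_num : ENNReal.ofReal 2 ≠ 0)]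
    exact le_top
  -- key: for every L' > D, limsup F l ≤ 2 * L'
  have key : ∀ L' : ℝ≥0∞, D < L' → limsup F l ≤ ENNReal.ofReal 2 * L' := by
    intro L' hL'
    have hev : ∀ᶠ δ in l, μ (Ioo (E - δ) (E + δ)) / ENNReal.ofReal (δ ^ α) < L' :=
      eventually_lt_of_limsup_lt hL'
    obtain ⟨u, hu, hsub⟩ := mem_nhdsGT_iff_exists_Ioo_subset.1 hev
    have hL : ∀ r ∈ Ioo (0:ℝ) u, μ (Ioo (E - r) (E + r)) ≤ L' * ENNReal.ofReal (r ^ α) := by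
      intro r hr
      have h1 : μ (Ioo (E - r) (E + r)) / ENNReal.ofReal (r ^ α) < L' := hsub hr
      exact (ENNReal.div_le_iff
        (ENNReal.ofReal_pos.2 (Real.rpow_pos_of_pos hr.1 α)).ne'
        ENNReal.ofReal_ne_top).1 h1.le
    set G := fun ε : ℝ => ENNReal.ofReal (ε ^ ((2:ℝ) - α) / u ^ 2) * μ univ
        + L' * ENNReal.ofReal (1 / (1 - α / 2)) with hG
    have hFG : ∀ᶠ ε in l, F ε ≤ G ε := by
      filter_upwards [eventually_mem_nhdsWithin] with ε hε
      exact aux_key_bound α hα0 hα1 μ E L' u hu hL ε hε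
    have h1 : limsup F l ≤ limsup G l := limsup_le_limsup hFG
    have htend : Tendsto G l (nhds (0 * μ univ + L' * ENNReal.ofReal (1 / (1 - α / 2)))) := by
      refine Tendsto.add ?_ tendsto_const_nhds
      refine ENNReal.Tendsto.mul_const ?_ (Or.inr (measure_ne_top μ univ))
      have hc : ContinuousAt (fun x : ℝ => x ^ ((2:ℝ) - α)) 0 :=
        Real.continuousAt_rpow_const 0 ((2:ℝ) - α) (Or.inr (by linarith))
      have h2 : Tendsto (fun ε : ℝ => ε ^ ((2:ℝ) - α) / u ^ 2) l (nhds 0) := by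
        have h3 : Tendsto (fun ε : ℝ => ε ^ ((2:ℝ) - α)) l (nhds 0) := by
          have h4 := hc.tendsto
          rw [Real.zero_rpow (show (2:ℝ) - α ≠ 0 by linarith)] at h4
          exact h4.mono_left (hl ▸ nhdsWithin_le_nhds)
        simpa using h3.div_const (u ^ 2)
      have h4 := (ENNReal.continuous_ofReal.tendsto 0).comp h2
      simpa using (show Tendsto (fun ε : ℝ => ENNReal.ofReal (ε ^ ((2:ℝ) - α) / u ^ 2)) l (nhds (ENNReal.ofReal 0)) from h4)
    have h5 : limsup G l = 0 * μ univ + L' * ENNReal.ofReal (1 / (1 - α / 2)) :=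
      htend.limsup_eq
    calc limsup F l ≤ limsup G l := h1
      _ = L' * ENNReal.ofReal (1 / (1 - α / 2)) := by rw [h5, zero_mul, zero_add]
      _ ≤ L' * ENNReal.ofReal 2 := by
          apply mul_le_mul_right
          apply ENNReal.ofReal_le_ofReal
          rw [div_le_iff₀ h2α]
          linarith
      _ = ENNReal.ofReal 2 * L' := mul_comm _ _
  -- conclude via epsilon of room
  apply ENNReal.le_of_forall_pos_le_add
  intro η hη _
  have hη2 : ((η : ℝ≥0∞) / 2) ≠ 0 := by
    simp [ENNReal.div_eq_zero_iff, hη.ne']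
  have hDlt : D < D + (η : ℝ≥0∞) / 2 := ENNReal.lt_add_right hDtop hη2
  have h6 := key (D + (η : ℝ≥0∞) / 2) hDlt
  calc limsup F l ≤ ENNReal.ofReal 2 * (D + (η : ℝ≥0∞) / 2) := h6
    _ = ENNReal.ofReal 2 * D + ENNReal.ofReal 2 * ((η : ℝ≥0∞) / 2) := mul_add _ _ _
    _ = ENNReal.ofReal 2 * D + (η : ℝ≥0∞) := by
        congr 1
        rw [show (ENNReal.ofReal 2) = (2:ℝ≥0∞) by norm_num]
        exact ENNReal.mul_div_cancel' (by norm_num) (by norm_num)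
end

section
/- Let d ≥ 1, Ω ⊆ ℤ^d, and let f, g : ℤ^d → ℂ vanish outside Ω. Then for every integer R ≥ 1, Σ_{r=1}^R | w_{∂(C_r ∩ Ω)}[f, g] | ≤ 2d · (Σ_{n ∈ C_{R+1} ∩ Ω} |f(n)|²)^{1/2} · (Σ_{n ∈ C_{R+1} ∩ Ω} |g(n)|²)^{1/2}. -/
/-- Two points `m, n ∈ ℤ^d` are neighbors if `Σ_i |m_i − n_i| = 1`. -/
def IsNbr {d : ℕ} (m n : Fin d → ℤ) : Prop := (∑ i, |m i - n i|) = 1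

/-- The cube `C_R = {n ∈ ℤ^d : |n_i| ≤ R for all i}`. -/
def cube (d : ℕ) (R : ℤ) : Set (Fin d → ℤ) := {n | ∀ i, |n i| ≤ R}

/-- The discrete Wronskian over `∂S`:
`w_{∂S}[f,g] = Σ_{m ∈ ∂S} ( f(m) Σ_{l ∈ N_S(m)} g(l) − g(m) Σ_{l ∈ N_S(m)} f(l) )`,
where `∂S = {m ∉ S : m has a neighbor in S}` and `N_S(m) = {l ∈ S : l ~ m}`. -/
noncomputable def wron {d : ℕ} (S : Set (Fin d → ℤ)) (f g : (Fin d → ℤ) → ℂ) : ℂ :=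
  ∑' m : {m : Fin d → ℤ // m ∉ S ∧ ∃ l ∈ S, IsNbr l m},
    (f m * (∑' l : {l : Fin d → ℤ // l ∈ S ∧ IsNbr l m}, g l)
      - g m * (∑' l : {l : Fin d → ℤ // l ∈ S ∧ IsNbr l m}, f l))

instance {d : ℕ} (m n : Fin d → ℤ) : Decidable (IsNbr m n) := by
  unfold IsNbr; infer_instance

private lemma isNbr_symm {d : ℕ} {m n : Fin d → ℤ} (h : IsNbr m n) : IsNbr n m := by
  unfold IsNbr at *
  simpa [abs_sub_comm] using h

private lemma isNbr_abs_le {d : ℕ} {l m : Fin d → ℤ} (h : IsNbr l m) (i : Fin d) :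
    |m i| ≤ |l i| + 1 := by
  have h1 : |l i - m i| ≤ 1 := by
    unfold IsNbr at h
    rw [← h]
    exact Finset.single_le_sum (f := fun j => |l j - m j|)
      (fun j _ => abs_nonneg _) (Finset.mem_univ i)
  calc |m i| = |l i - (l i - m i)| := by ring_nf
    _ ≤ |l i| + |l i - m i| := abs_sub _ _
    _ ≤ |l i| + 1 := by linarith

private lemma isNbr_exists {d : ℕ} {l m : Fin d → ℤ} (h : IsNbr l m) :
    ∃ i, |l i - m i| = 1 ∧ ∀ j, j ≠ i → l j = m j := by
  unfold IsNbr at h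
  have hex : ∃ i, l i ≠ m i := by
    by_contra hc
    push_neg at hc
    simp [hc] at h
  obtain ⟨i, hi⟩ := hex
  have h1 : |l i - m i| ≤ 1 := by
    rw [← h]
    exact Finset.single_le_sum (f := fun j => |l j - m j|)
      (fun j _ => abs_nonneg _) (Finset.mem_univ i)
  have h2 : 1 ≤ |l i - m i| := Int.one_le_abs (sub_ne_zero.2 hi)
  have heq : |l i - m i| = 1 := le_antisymm h1 h2
  refine ⟨i, heq, fun j hj => ?_⟩
  have hz : ∑ k ∈ Finset.univ.erase i, |l k - m k| = 0 := by
    have h3 := Finset.sum_erase_add Finset.univ (fun k => |l k - m k|) (Finset.mem_univ i)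
    linarith [h3.trans h, heq]
  have h4 := (Finset.sum_eq_zero_iff_of_nonneg (fun k _ => abs_nonneg (l k - m k))).1 hz j
    (Finset.mem_erase.2 ⟨hj, Finset.mem_univ j⟩)
  have := abs_eq_zero.1 h4
  linarith [this]

private lemma card_nbr_le {d : ℕ} (hd : 1 ≤ d) (m : Fin d → ℤ) (B : Finset (Fin d → ℤ)) :
    (B.filter (fun l => IsNbr l m)).card ≤ 2 * d := by
  have hcard : (B.filter (fun l => IsNbr l m)).card ≤ (Finset.univ : Finset (Fin d × Bool)).card := by
    apply Finset.card_le_card_of_injOn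
      (fun l => if h : IsNbr l m then (Classical.choose (isNbr_exists h),
        decide (m (Classical.choose (isNbr_exists h)) < l (Classical.choose (isNbr_exists h))))
        else (⟨0, hd⟩, false))
    · intro _ _; exact Finset.mem_univ _
    · intro l hl l' hl' heq
      have hn : IsNbr l m := (Finset.mem_filter.1 hl).2
      have hn' : IsNbr l' m := (Finset.mem_filter.1 hl').2
      dsimp only at heq
      rw [dif_pos hn, dif_pos hn'] at heq
      obtain ⟨hi1, hi2⟩ := Classical.choose_spec (isNbr_exists hn)
      obtain ⟨hi1', hi2'⟩ := Classical.choose_spec (isNbr_exists hn')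
      set i := Classical.choose (isNbr_exists hn) with hidef
      set i' := Classical.choose (isNbr_exists hn') with hidef'
      have hii : i = i' := congrArg Prod.fst heq
      have hb : decide (m i < l i) = decide (m i' < l' i') := congrArg Prod.snd heq
      rw [← hii] at hi1' hi2' hb
      have hb2 : (m i < l i) ↔ (m i < l' i) := decide_eq_decide.1 hb
      funext j
      by_cases hji : j = i
      · subst hji
        have e1 : l i - m i = 1 ∨ l i - m i = -1 := (abs_eq (by norm_num)).1 hi1
        have e2 : l' i - m i = 1 ∨ l' i - m i = -1 := (abs_eq (by norm_num)).1 hi1'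
        rcases e1 with e1 | e1 <;> rcases e2 with e2 | e2 <;> omega
      · rw [hi2 j hji, ← hi2' j hji]
  simpa [two_mul, mul_comm] using hcard

open scoped Classical

private lemma inner_tsum_eq {d : ℕ} (S : Set (Fin d → ℤ)) (F : (Fin d → ℤ) → ℂ)
    (B : Finset (Fin d → ℤ)) (hS : ∀ l ∈ S, l ∈ B) (m : Fin d → ℤ) :
    (∑' l : {l : Fin d → ℤ // l ∈ S ∧ IsNbr l m}, F l)
      = ∑ l ∈ B, if (l ∈ S ∧ IsNbr l m) then F l else 0 := by
  classical
  have h1 : (∑' l : {l : Fin d → ℤ // l ∈ S ∧ IsNbr l m}, F l)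
      = ∑' l : ↥{l : Fin d → ℤ | l ∈ S ∧ IsNbr l m}, F ↑l := rfl
  rw [h1, tsum_subtype]
  rw [tsum_eq_sum (s := B) (fun b hb => Set.indicator_of_notMem
    (fun hmem => hb (hS b hmem.1)) F)]
  exact Finset.sum_congr rfl fun l _ => by
    by_cases hP : l ∈ S ∧ IsNbr l m
    · rw [Set.indicator_of_mem (s := {l : Fin d → ℤ | l ∈ S ∧ IsNbr l m}) hP, if_pos hP]
    · rw [Set.indicator_of_notMem (s := {l : Fin d → ℤ | l ∈ S ∧ IsNbr l m}) hP, if_neg hP]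

private lemma wron_eq_sum {d : ℕ} (S : Set (Fin d → ℤ)) (f g : (Fin d → ℤ) → ℂ)
    (B : Finset (Fin d → ℤ)) (hS : ∀ l ∈ S, l ∈ B)
    (hbd : ∀ m, m ∉ S → (∃ l ∈ S, IsNbr l m) → m ∈ B) :
    wron S f g = ∑ m ∈ B, ∑ l ∈ B,
      if (m ∉ S ∧ l ∈ S ∧ IsNbr l m) then (f m * g l - g m * f l) else 0 := by
  classical
  set Φ : (Fin d → ℤ) → ℂ := fun x =>
    f x * (∑' l : {l : Fin d → ℤ // l ∈ S ∧ IsNbr l x}, g ↑l)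
      - g x * (∑' l : {l : Fin d → ℤ // l ∈ S ∧ IsNbr l x}, f ↑l) with hΦ
  have h1 : wron S f g = ∑' m : ↥{x : Fin d → ℤ | x ∉ S ∧ ∃ l ∈ S, IsNbr l x}, Φ ↑m := rfl
  rw [h1, tsum_subtype]
  rw [tsum_eq_sum (s := B) (fun b hb => Set.indicator_of_notMem
    (fun hmem => hb (hbd b hmem.1 hmem.2)) Φ)]
  refine Finset.sum_congr rfl fun m _ => ?_
  by_cases hm : m ∈ {x : Fin d → ℤ | x ∉ S ∧ ∃ l ∈ S, IsNbr l x}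
  · rw [Set.indicator_of_mem hm, hΦ]
    simp only
    rw [inner_tsum_eq S g B hS m, inner_tsum_eq S f B hS m,
      Finset.mul_sum, Finset.mul_sum, ← Finset.sum_sub_distrib]
    refine Finset.sum_congr rfl fun l _ => ?_
    by_cases hP : l ∈ S ∧ IsNbr l m
    · rw [if_pos hP, if_pos hP, if_pos ⟨hm.1, hP⟩]
    · rw [if_neg hP, if_neg hP, if_neg (fun hc => hP ⟨hc.2.1, hc.2.2⟩)]
      simp
  · rw [Set.indicator_of_notMem hm]
    refine (Finset.sum_eq_zero fun l _ => ?_).symm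
    rw [if_neg]
    rintro ⟨h1, h2, h3⟩
    exact hm ⟨h1, l, h2, h3⟩

private def condC {d : ℕ} (Ω : Set (Fin d → ℤ)) (r : ℕ) (m l : Fin d → ℤ) : Prop :=
  m ∉ cube d (r : ℤ) ∩ Ω ∧ l ∈ cube d (r : ℤ) ∩ Ω ∧ IsNbr l m

private lemma condC_same {d : ℕ} {Ω : Set (Fin d → ℤ)} {a b : ℕ} {x y : Fin d → ℤ}
    (hx : x ∈ Ω) (ha : condC Ω a x y) (hb : condC Ω b x y) : a = b := by
  obtain ⟨ha1, ha2, ha3⟩ := ha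
  obtain ⟨hb1, hb2, hb3⟩ := hb
  by_contra hne
  rcases Nat.lt_or_ge a b with hab | hab
  · apply hb1
    refine ⟨fun i => ?_, hx⟩
    have h1 := isNbr_abs_le ha3 i
    have h2 : |y i| ≤ (a : ℤ) := ha2.1 i
    have h3 : (a : ℤ) + 1 ≤ b := by exact_mod_cast hab
    linarith
  · have hba : b < a := lt_of_le_of_ne hab fun h => hne h.symm
    apply ha1
    refine ⟨fun i => ?_, hx⟩
    have h1 := isNbr_abs_le hb3 i
    have h2 : |y i| ≤ (b : ℤ) := hb2.1 i
    have h3 : (b : ℤ) + 1 ≤ a := by exact_mod_cast hba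
    linarith

private lemma condC_mixed {d : ℕ} {Ω : Set (Fin d → ℤ)} {a b : ℕ} {m l : Fin d → ℤ}
    (hm : m ∈ Ω) (hl : l ∈ Ω) (ha : condC Ω a m l) (hb : condC Ω b l m) : False := by
  obtain ⟨ha1, ha2, ha3⟩ := ha
  obtain ⟨hb1, hb2, hb3⟩ := hb
  rcases le_or_gt a b with hab | hab
  · exact hb1 ⟨fun i => le_trans (ha2.1 i) (by exact_mod_cast hab), hl⟩
  · exact ha1 ⟨fun i => le_trans (hb2.1 i) (by exact_mod_cast hab.le), hm⟩

private lemma abs_wron_le {d : ℕ} (Ω : Set (Fin d → ℤ)) (f g : (Fin d → ℤ) → ℂ)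
    (B : Finset (Fin d → ℤ)) (r : ℕ)
    (hS : ∀ l ∈ cube d (r : ℤ) ∩ Ω, l ∈ B)
    (hbd : ∀ m, m ∉ cube d (r : ℤ) ∩ Ω → (∃ l ∈ cube d (r : ℤ) ∩ Ω, IsNbr l m) → m ∈ B) :
    ‖wron (cube d (r : ℤ) ∩ Ω) f g‖ ≤
      ∑ m ∈ B, ∑ l ∈ B, if condC Ω r m l then ‖f m‖ * ‖g l‖ + ‖g m‖ * ‖f l‖ else 0 := by
  rw [wron_eq_sum _ f g B hS hbd]
  refine (norm_sum_le _ _).trans (Finset.sum_le_sum fun m _ =>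
    (norm_sum_le _ _).trans (Finset.sum_le_sum fun l _ => ?_))
  by_cases hc : condC Ω r m l
  · rw [if_pos hc, if_pos (show (m ∉ cube d (r:ℤ) ∩ Ω ∧ l ∈ cube d (r:ℤ) ∩ Ω ∧ IsNbr l m) from hc)]
    refine (norm_sub_le _ _).trans ?_
    rw [norm_mul, norm_mul]
  · rw [if_neg (show ¬(m ∉ cube d (r:ℤ) ∩ Ω ∧ l ∈ cube d (r:ℤ) ∩ Ω ∧ IsNbr l m) from hc), if_neg hc]
    simp

private lemma pair_sum_le {d : ℕ} {Ω : Set (Fin d → ℤ)} {f g : (Fin d → ℤ) → ℂ}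
    (hf : ∀ n, n ∉ Ω → f n = 0) (hg : ∀ n, n ∉ Ω → g n = 0) (R : ℕ)
    (m l : Fin d → ℤ) :
    (∑ r ∈ Finset.Icc 1 R, if condC Ω r m l then ‖f m‖ * ‖g l‖ else 0)
      + (∑ r ∈ Finset.Icc 1 R, if condC Ω r l m then ‖f m‖ * ‖g l‖ else 0)
      ≤ if IsNbr l m then ‖f m‖ * ‖g l‖ else 0 := by
  set v : ℝ := ‖f m‖ * ‖g l‖ with hv
  by_cases hv0 : v = 0
  · simp [hv0]
  · have hm : m ∈ Ω := by
      by_contra h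
      exact hv0 (by rw [hv, hf m h]; simp)
    have hl : l ∈ Ω := by
      by_contra h
      exact hv0 (by rw [hv, hg l h]; simp)
    have hvn : 0 ≤ v := mul_nonneg (norm_nonneg _) (norm_nonneg _)
    rw [← Finset.sum_add_distrib]
    have hstep : ∀ r ∈ Finset.Icc 1 R,
        ((if condC Ω r m l then v else 0) + (if condC Ω r l m then v else 0))
          = if (condC Ω r m l ∨ condC Ω r l m) then v else 0 := by
      intro r _
      by_cases h1 : condC Ω r m l <;> by_cases h2 : condC Ω r l m
      · exact absurd h1.2.1 h2.1
      · simp [h1, h2]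
      · simp [h1, h2]
      · simp [h1, h2]
    rw [Finset.sum_congr rfl hstep]
    by_cases hnb : IsNbr l m
    · rw [if_pos hnb, ← Finset.sum_filter]
      have hcard : ((Finset.Icc 1 R).filter
          (fun r => condC Ω r m l ∨ condC Ω r l m)).card ≤ 1 := by
        refine Finset.card_le_one.2 fun r hr r' hr' => ?_
        have hsr := (Finset.mem_filter.1 hr).2
        have hsr' := (Finset.mem_filter.1 hr').2
        rcases hsr with h | h <;> rcases hsr' with h' | h'
        · exact condC_same hm h h'
        · exact absurd (condC_mixed hm hl h h') id
        · exact absurd (condC_mixed hm hl h' h) id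
        · exact condC_same hl h h'
      calc ∑ _r ∈ (Finset.Icc 1 R).filter (fun r => condC Ω r m l ∨ condC Ω r l m), v
          = ((Finset.Icc 1 R).filter (fun r => condC Ω r m l ∨ condC Ω r l m)).card • v :=
            Finset.sum_const v
        _ = (((Finset.Icc 1 R).filter (fun r => condC Ω r m l ∨ condC Ω r l m)).card : ℝ) * v :=
            nsmul_eq_mul _ _
        _ ≤ 1 * v := by
            refine mul_le_mul_of_nonneg_right ?_ hvn
            exact_mod_cast hcard
        _ = v := one_mul v
    · rw [if_neg hnb]
      refine le_of_eq (Finset.sum_eq_zero fun r _ => ?_)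
      rw [if_neg]
      rintro (h | h)
      · exact hnb h.2.2
      · exact hnb (isNbr_symm h.2.2)

private lemma cs_step {d : ℕ} (hd : 1 ≤ d) (f g : (Fin d → ℤ) → ℂ) (B : Finset (Fin d → ℤ)) :
    ∑ m ∈ B, ∑ l ∈ B, (if IsNbr l m then ‖f m‖ * ‖g l‖ else 0)
      ≤ 2 * (d : ℝ) * Real.sqrt (∑ m ∈ B, ‖f m‖ ^ 2) * Real.sqrt (∑ m ∈ B, ‖g m‖ ^ 2) := by
  classical
  set a : (Fin d → ℤ) × (Fin d → ℤ) → ℝ := fun p => if IsNbr p.2 p.1 then ‖f p.1‖ else 0 with hadef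
  set b : (Fin d → ℤ) × (Fin d → ℤ) → ℝ := fun p => if IsNbr p.2 p.1 then ‖g p.2‖ else 0 with hbdef
  have h1 : ∑ m ∈ B, ∑ l ∈ B, (if IsNbr l m then ‖f m‖ * ‖g l‖ else 0)
      = ∑ p ∈ B ×ˢ B, a p * b p := by
    rw [Finset.sum_product]
    refine Finset.sum_congr rfl fun m _ => Finset.sum_congr rfl fun l _ => ?_
    by_cases h : IsNbr l m <;> simp [hadef, hbdef, h]
  have ha : ∑ p ∈ B ×ˢ B, a p ^ 2 ≤ (2 * (d : ℝ)) * ∑ m ∈ B, ‖f m‖ ^ 2 := by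
    rw [Finset.sum_product]
    calc ∑ m ∈ B, ∑ l ∈ B, a (m, l) ^ 2
        = ∑ m ∈ B, ((B.filter (fun l => IsNbr l m)).card : ℝ) * ‖f m‖ ^ 2 := by
          refine Finset.sum_congr rfl fun m _ => ?_
          have : ∀ l ∈ B, a (m, l) ^ 2 = if IsNbr l m then ‖f m‖ ^ 2 else 0 := by
            intro l _
            by_cases h : IsNbr l m <;> simp [hadef, h]
          rw [Finset.sum_congr rfl this, ← Finset.sum_filter, Finset.sum_const,
            nsmul_eq_mul]
      _ ≤ ∑ m ∈ B, (2 * (d : ℝ)) * ‖f m‖ ^ 2 := by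
          refine Finset.sum_le_sum fun m _ => ?_
          refine mul_le_mul_of_nonneg_right ?_ (sq_nonneg _)
          exact_mod_cast card_nbr_le hd m B
      _ = (2 * (d : ℝ)) * ∑ m ∈ B, ‖f m‖ ^ 2 := (Finset.mul_sum _ _ _).symm
  have hb : ∑ p ∈ B ×ˢ B, b p ^ 2 ≤ (2 * (d : ℝ)) * ∑ m ∈ B, ‖g m‖ ^ 2 := by
    rw [Finset.sum_product]
    have hswap : ∑ m ∈ B, ∑ l ∈ B, b (m, l) ^ 2 = ∑ l ∈ B, ∑ m ∈ B, b (m, l) ^ 2 :=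
      Finset.sum_comm
    rw [hswap]
    calc ∑ l ∈ B, ∑ m ∈ B, b (m, l) ^ 2
        = ∑ l ∈ B, ((B.filter (fun m => IsNbr m l)).card : ℝ) * ‖g l‖ ^ 2 := by
          refine Finset.sum_congr rfl fun l _ => ?_
          have h2 : ∀ m ∈ B, b (m, l) ^ 2 = if IsNbr m l then ‖g l‖ ^ 2 else 0 := by
            intro m _
            by_cases h : IsNbr l m
            · rw [if_pos (isNbr_symm h)]; simp [hbdef, h]
            · rw [if_neg (fun hc => h (isNbr_symm hc))]; simp [hbdef, h]
          rw [Finset.sum_congr rfl h2, ← Finset.sum_filter, Finset.sum_const, nsmul_eq_mul]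
      _ ≤ ∑ l ∈ B, (2 * (d : ℝ)) * ‖g l‖ ^ 2 := by
          refine Finset.sum_le_sum fun l _ => ?_
          refine mul_le_mul_of_nonneg_right ?_ (sq_nonneg _)
          exact_mod_cast card_nbr_le hd l B
      _ = (2 * (d : ℝ)) * ∑ l ∈ B, ‖g l‖ ^ 2 := (Finset.mul_sum _ _ _).symm
  have hF : (0:ℝ) ≤ ∑ m ∈ B, ‖f m‖ ^ 2 := Finset.sum_nonneg fun m _ => sq_nonneg _
  have hG : (0:ℝ) ≤ ∑ m ∈ B, ‖g m‖ ^ 2 := Finset.sum_nonneg fun m _ => sq_nonneg _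
  have h2d : (0:ℝ) ≤ 2 * (d : ℝ) := by positivity
  calc ∑ m ∈ B, ∑ l ∈ B, (if IsNbr l m then ‖f m‖ * ‖g l‖ else 0)
      = ∑ p ∈ B ×ˢ B, a p * b p := h1
    _ ≤ Real.sqrt (∑ p ∈ B ×ˢ B, a p ^ 2) * Real.sqrt (∑ p ∈ B ×ˢ B, b p ^ 2) :=
        Real.sum_mul_le_sqrt_mul_sqrt _ _ _
    _ ≤ Real.sqrt ((2 * (d : ℝ)) * ∑ m ∈ B, ‖f m‖ ^ 2)
          * Real.sqrt ((2 * (d : ℝ)) * ∑ m ∈ B, ‖g m‖ ^ 2) :=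
        mul_le_mul (Real.sqrt_le_sqrt ha) (Real.sqrt_le_sqrt hb) (Real.sqrt_nonneg _)
          (Real.sqrt_nonneg _)
    _ = 2 * (d : ℝ) * Real.sqrt (∑ m ∈ B, ‖f m‖ ^ 2) * Real.sqrt (∑ m ∈ B, ‖g m‖ ^ 2) := by
        rw [Real.sqrt_mul h2d, Real.sqrt_mul h2d]
        rw [show Real.sqrt (2 * (d:ℝ)) * Real.sqrt (∑ m ∈ B, ‖f m‖ ^ 2)
            * (Real.sqrt (2 * (d:ℝ)) * Real.sqrt (∑ m ∈ B, ‖g m‖ ^ 2))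
          = (Real.sqrt (2 * (d:ℝ)) * Real.sqrt (2 * (d:ℝ)))
            * Real.sqrt (∑ m ∈ B, ‖f m‖ ^ 2) * Real.sqrt (∑ m ∈ B, ‖g m‖ ^ 2) by ring]
        rw [Real.mul_self_sqrt h2d]

private lemma tsum_sq_eq {d : ℕ} (Ω : Set (Fin d → ℤ)) (f : (Fin d → ℤ) → ℂ)
    (hf : ∀ n, n ∉ Ω → f n = 0) (N : ℤ) (B : Finset (Fin d → ℤ))
    (hB1 : ∀ x, x ∈ cube d N → x ∈ B) (hB2 : ∀ x ∈ B, x ∈ cube d N) :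
    (∑' n : ↥(cube d N ∩ Ω), ‖f ↑n‖ ^ 2) = ∑ m ∈ B, ‖f m‖ ^ 2 := by
  classical
  have h1 : (∑' n : ↥(cube d N ∩ Ω), ‖f ↑n‖ ^ 2)
      = ∑' x, (cube d N ∩ Ω).indicator (fun x => ‖f x‖ ^ 2) x := tsum_subtype (cube d N ∩ Ω) (fun x => ‖f x‖ ^ 2)
  rw [h1, tsum_eq_sum (s := B)
    (fun x hx => Set.indicator_of_notMem (fun hmem => hx (hB1 x hmem.1)) _)]
  refine Finset.sum_congr rfl fun m hm => ?_
  by_cases hmΩ : m ∈ Ω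
  · exact Set.indicator_of_mem (show m ∈ cube d N ∩ Ω from ⟨hB2 m hm, hmΩ⟩) _
  · rw [Set.indicator_of_notMem (fun hc => hmΩ hc.2), hf m hmΩ]
    simp

/-- For `f, g` vanishing outside `Ω ⊆ ℤ^d` and every integer `R ≥ 1`,
`Σ_{r=1}^R |w_{∂(C_r ∩ Ω)}[f,g]| ≤ 2d · ‖f‖_{ℓ²(C_{R+1} ∩ Ω)} · ‖g‖_{ℓ²(C_{R+1} ∩ Ω)}`. -/
theorem discrete_wronskian_sum_bound
    (d : ℕ) (hd : 1 ≤ d) (Ω : Set (Fin d → ℤ))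
    (f g : (Fin d → ℤ) → ℂ)
    (hf : ∀ n, n ∉ Ω → f n = 0) (hg : ∀ n, n ∉ Ω → g n = 0)
    (R : ℕ) (hR : 1 ≤ R) :
    ∑ r ∈ Finset.Icc 1 R, ‖wron (cube d (r : ℤ) ∩ Ω) f g‖ ≤
      2 * d * Real.sqrt (∑' n : ↥(cube d ((R : ℤ) + 1) ∩ Ω), ‖f n‖ ^ 2)
            * Real.sqrt (∑' n : ↥(cube d ((R : ℤ) + 1) ∩ Ω), ‖g n‖ ^ 2) := by
  classical
  set B : Finset (Fin d → ℤ) :=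
    Fintype.piFinset (fun _ : Fin d => Finset.Icc (-((R : ℤ) + 1)) ((R : ℤ) + 1)) with hBdef
  have hBmem : ∀ x : Fin d → ℤ, x ∈ B ↔ ∀ i, |x i| ≤ (R : ℤ) + 1 := by
    intro x
    simp [hBdef, Fintype.mem_piFinset, Finset.mem_Icc, abs_le]
  have hSB : ∀ r ∈ Finset.Icc 1 R, ∀ l ∈ cube d (r : ℤ) ∩ Ω, l ∈ B := by
    intro r hr l hl
    rw [hBmem]
    intro i
    have h1 : |l i| ≤ (r : ℤ) := hl.1 i
    have h2 : (r : ℤ) ≤ (R : ℤ) := by exact_mod_cast (Finset.mem_Icc.1 hr).2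
    linarith
  have hbdB : ∀ r ∈ Finset.Icc 1 R, ∀ m, m ∉ cube d (r : ℤ) ∩ Ω →
      (∃ l ∈ cube d (r : ℤ) ∩ Ω, IsNbr l m) → m ∈ B := by
    rintro r hr m _ ⟨l, hl, hnb⟩
    rw [hBmem]
    intro i
    have h0 := isNbr_abs_le hnb i
    have h1 : |l i| ≤ (r : ℤ) := hl.1 i
    have h2 : (r : ℤ) ≤ (R : ℤ) := by exact_mod_cast (Finset.mem_Icc.1 hr).2
    linarith
  have hB1 : ∀ x, x ∈ cube d ((R : ℤ) + 1) → x ∈ B := fun x hx => (hBmem x).2 hx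
  have hB2 : ∀ x ∈ B, x ∈ cube d ((R : ℤ) + 1) := fun x hx => (hBmem x).1 hx
  calc ∑ r ∈ Finset.Icc 1 R, ‖wron (cube d (r : ℤ) ∩ Ω) f g‖
      ≤ ∑ r ∈ Finset.Icc 1 R, ∑ m ∈ B, ∑ l ∈ B,
          (if condC Ω r m l then ‖f m‖ * ‖g l‖ + ‖g m‖ * ‖f l‖ else 0) :=
        Finset.sum_le_sum fun r hr => abs_wron_le Ω f g B r (hSB r hr) (hbdB r hr)
    _ = ∑ m ∈ B, ∑ l ∈ B, ∑ r ∈ Finset.Icc 1 R,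
          (if condC Ω r m l then ‖f m‖ * ‖g l‖ + ‖g m‖ * ‖f l‖ else 0) := by
        rw [Finset.sum_comm]
        exact Finset.sum_congr rfl fun m _ => Finset.sum_comm
    _ = ∑ m ∈ B, ∑ l ∈ B,
          ((∑ r ∈ Finset.Icc 1 R, if condC Ω r m l then ‖f m‖ * ‖g l‖ else 0)
            + ∑ r ∈ Finset.Icc 1 R, if condC Ω r m l then ‖g m‖ * ‖f l‖ else 0) := by
        refine Finset.sum_congr rfl fun m _ => Finset.sum_congr rfl fun l _ => ?_
        rw [← Finset.sum_add_distrib]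
        refine Finset.sum_congr rfl fun r _ => ?_
        by_cases h : condC Ω r m l <;> simp [h]
    _ = (∑ m ∈ B, ∑ l ∈ B, ∑ r ∈ Finset.Icc 1 R, if condC Ω r m l then ‖f m‖ * ‖g l‖ else 0)
          + ∑ m ∈ B, ∑ l ∈ B, ∑ r ∈ Finset.Icc 1 R,
              if condC Ω r m l then ‖g m‖ * ‖f l‖ else 0 := by
        rw [← Finset.sum_add_distrib]
        exact Finset.sum_congr rfl fun m _ => Finset.sum_add_distrib
    _ = (∑ m ∈ B, ∑ l ∈ B, ∑ r ∈ Finset.Icc 1 R, if condC Ω r m l then ‖f m‖ * ‖g l‖ else 0)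
          + ∑ m ∈ B, ∑ l ∈ B, ∑ r ∈ Finset.Icc 1 R,
              if condC Ω r l m then ‖f m‖ * ‖g l‖ else 0 := by
        congr 1
        calc ∑ m ∈ B, ∑ l ∈ B, ∑ r ∈ Finset.Icc 1 R,
              (if condC Ω r m l then ‖g m‖ * ‖f l‖ else 0)
            = ∑ l ∈ B, ∑ m ∈ B, ∑ r ∈ Finset.Icc 1 R,
              (if condC Ω r m l then ‖g m‖ * ‖f l‖ else 0) := Finset.sum_comm
          _ = ∑ m ∈ B, ∑ l ∈ B, ∑ r ∈ Finset.Icc 1 R,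
              (if condC Ω r l m then ‖g l‖ * ‖f m‖ else 0) := rfl
          _ = ∑ m ∈ B, ∑ l ∈ B, ∑ r ∈ Finset.Icc 1 R,
              (if condC Ω r l m then ‖f m‖ * ‖g l‖ else 0) := by
              refine Finset.sum_congr rfl fun m _ => Finset.sum_congr rfl fun l _ =>
                Finset.sum_congr rfl fun r _ => ?_
              rw [mul_comm]
    _ = ∑ m ∈ B, ∑ l ∈ B,
          ((∑ r ∈ Finset.Icc 1 R, if condC Ω r m l then ‖f m‖ * ‖g l‖ else 0)
            + ∑ r ∈ Finset.Icc 1 R, if condC Ω r l m then ‖f m‖ * ‖g l‖ else 0) := by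
        rw [← Finset.sum_add_distrib]
        exact Finset.sum_congr rfl fun m _ => Finset.sum_add_distrib.symm
    _ ≤ ∑ m ∈ B, ∑ l ∈ B, (if IsNbr l m then ‖f m‖ * ‖g l‖ else 0) :=
        Finset.sum_le_sum fun m _ => Finset.sum_le_sum fun l _ => pair_sum_le hf hg R m l
    _ ≤ 2 * (d : ℝ) * Real.sqrt (∑ m ∈ B, ‖f m‖ ^ 2) * Real.sqrt (∑ m ∈ B, ‖g m‖ ^ 2) :=
        cs_step hd f g B
    _ = 2 * d * Real.sqrt (∑' n : ↥(cube d ((R : ℤ) + 1) ∩ Ω), ‖f n‖ ^ 2)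
          * Real.sqrt (∑' n : ↥(cube d ((R : ℤ) + 1) ∩ Ω), ‖g n‖ ^ 2) := by
        rw [tsum_sq_eq Ω f hf ((R : ℤ) + 1) B hB1 hB2,
          tsum_sq_eq Ω g hg ((R : ℤ) + 1) B hB1 hB2]
end

section
/- Let 𝓗 be a complex Hilbert space, K ⊆ 𝓗 a closed subspace and P the orthogonal projection onto K. Let ψ₁, ψ₂ ∈ 𝓗 satisfy ⟨ψ₁, ψ₂⟩ = 0 and ‖ψ₁ + ψ₂‖ = 1, and set ψ = ψ₁ + ψ₂. Let U : ℝ → B(𝓗) be a family of operators with ‖U_t x‖ = ‖x‖ for all t ∈ ℝ and x ∈ 𝓗, such that t ↦ U_t ψ₁ and t ↦ U_t ψ are continuous. Let T > 0 and suppose (1/T) ∫₀^T ‖P(U_t ψ₁)‖² dt ≤ ‖ψ₁‖⁴/64. Then (1/T) ∫₀^T ‖U_t ψ − P(U_t ψ)‖² dt ≥ ‖ψ₁‖²/2. -/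
open MeasureTheory Set

/-- Let `K` be a closed subspace of a complex Hilbert space `𝓗` with
orthogonal projection `P`, let `ψ = ψ₁ + ψ₂` with `⟨ψ₁, ψ₂⟩ = 0` and `‖ψ‖ = 1`, and let
`U_t` be norm-preserving operators with `t ↦ U_t ψ₁` and `t ↦ U_t ψ` continuous. If
`(1/T) ∫₀^T ‖P(U_t ψ₁)‖² dt ≤ ‖ψ₁‖⁴/64`, then
`(1/T) ∫₀^T ‖U_t ψ − P(U_t ψ)‖² dt ≥ ‖ψ₁‖²/2`. -/
theorem time_average_outside_projection_lower_bound
    {𝓗 : Type*} [NormedAddCommGroup 𝓗] [InnerProductSpace ℂ 𝓗] [CompleteSpace 𝓗]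
    (K : Submodule ℂ 𝓗) (hK : IsClosed (K : Set 𝓗)) [K.HasOrthogonalProjection]
    (ψ₁ ψ₂ : 𝓗) (horth : (inner ℂ ψ₁ ψ₂ : ℂ) = 0) (hnorm : ‖ψ₁ + ψ₂‖ = 1)
    (U : ℝ → 𝓗 →L[ℂ] 𝓗) (hU : ∀ (t : ℝ) (x : 𝓗), ‖U t x‖ = ‖x‖)
    (hc₁ : Continuous fun t => U t ψ₁)
    (hc : Continuous fun t => U t (ψ₁ + ψ₂))
    (T : ℝ) (hT : 0 < T)
    (hbound : (1 / T) * ∫ t in Ioc (0 : ℝ) T,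
        ‖(K.orthogonalProjectionOnto (U t ψ₁) : 𝓗)‖ ^ 2 ≤ ‖ψ₁‖ ^ 4 / 64) :
    (1 / T) * ∫ t in Ioc (0 : ℝ) T,
        ‖U t (ψ₁ + ψ₂) - (K.orthogonalProjectionOnto (U t (ψ₁ + ψ₂)) : 𝓗)‖ ^ 2
      ≥ ‖ψ₁‖ ^ 2 / 2 := by
  set a := ‖ψ₁‖ with ha
  have hcont1 : Continuous fun t => ‖(K.orthogonalProjectionOnto (U t ψ₁) : 𝓗)‖ ^ 2 := by
    have : Continuous fun t => (K.orthogonalProjectionOnto (U t ψ₁) : 𝓗) :=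
      (K.subtypeL.comp (K.orthogonalProjectionOnto)).continuous.comp hc₁
    exact (this.norm).pow 2
  have hcont2 : Continuous fun t =>
      ‖U t (ψ₁ + ψ₂) - (K.orthogonalProjectionOnto (U t (ψ₁ + ψ₂)) : 𝓗)‖ ^ 2 := by
    have hP : Continuous fun t => (K.orthogonalProjectionOnto (U t (ψ₁ + ψ₂)) : 𝓗) :=
      (K.subtypeL.comp (K.orthogonalProjectionOnto)).continuous.comp hc
    exact ((hc.sub hP).norm).pow 2
  have hint1 : IntegrableOn (fun t => ‖(K.orthogonalProjectionOnto (U t ψ₁) : 𝓗)‖ ^ 2)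
      (Ioc (0 : ℝ) T) := hcont1.integrableOn_Ioc
  have hint2 : IntegrableOn (fun t =>
      ‖U t (ψ₁ + ψ₂) - (K.orthogonalProjectionOnto (U t (ψ₁ + ψ₂)) : 𝓗)‖ ^ 2)
      (Ioc (0 : ℝ) T) := hcont2.integrableOn_Ioc
  by_cases h0 : ψ₁ = 0
  · have haz : a = 0 := by simp [ha, h0]
    rw [haz]
    have h1 : (0:ℝ) ≤ ∫ t in Ioc (0 : ℝ) T,
        ‖U t (ψ₁ + ψ₂) - (K.orthogonalProjectionOnto (U t (ψ₁ + ψ₂)) : 𝓗)‖ ^ 2 :=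
      setIntegral_nonneg measurableSet_Ioc (fun t _ => by positivity)
    have : (0:ℝ) ≤ (1 / T) * ∫ t in Ioc (0 : ℝ) T,
        ‖U t (ψ₁ + ψ₂) - (K.orthogonalProjectionOnto (U t (ψ₁ + ψ₂)) : 𝓗)‖ ^ 2 := by
      positivity
    linarith
  have ha0 : 0 < a := norm_pos_iff.mpr h0
  have ha2 : (0:ℝ) < a ^ 2 := by positivity
  -- pointwise inner-product bound
  have key : ∀ t : ℝ, a ^ 2 ≤
      a * ‖U t (ψ₁ + ψ₂) - (K.orthogonalProjectionOnto (U t (ψ₁ + ψ₂)) : 𝓗)‖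
        + ‖(K.orthogonalProjectionOnto (U t ψ₁) : 𝓗)‖ := by
    intro t
    set u := U t ψ₁ with hu
    set v := U t (ψ₁ + ψ₂) with hv
    set Pv := (K.orthogonalProjectionOnto v : 𝓗) with hPv
    have hiso : (inner ℂ u v : ℂ) = inner ℂ ψ₁ (ψ₁ + ψ₂) :=
      LinearIsometry.inner_map_map ⟨(U t).toLinearMap, hU t⟩ ψ₁ (ψ₁ + ψ₂)
    have hre : RCLike.re (inner ℂ u v : ℂ) = a ^ 2 := by
      rw [hiso, inner_add_right, horth, add_zero]
      exact inner_self_eq_norm_sq ψ₁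
    have hsplit : (inner ℂ u v : ℂ)
        = inner ℂ u (v - Pv) + inner ℂ (K.orthogonalProjectionOnto u : 𝓗) v := by
      rw [← Submodule.starProjection_apply, Submodule.inner_starProjection_left_eq_right,
          Submodule.starProjection_apply, inner_sub_right]; ring
    have hre2 : RCLike.re (inner ℂ u v : ℂ)
        = RCLike.re (inner ℂ u (v - Pv) : ℂ)
          + RCLike.re (inner ℂ (K.orthogonalProjectionOnto u : 𝓗) v : ℂ) := by
      rw [hsplit, map_add]
    have h1 : RCLike.re (inner ℂ u (v - Pv) : ℂ) ≤ ‖u‖ * ‖v - Pv‖ :=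
      re_inner_le_norm u (v - Pv)
    have h2 : RCLike.re (inner ℂ (K.orthogonalProjectionOnto u : 𝓗) v : ℂ)
        ≤ ‖(K.orthogonalProjectionOnto u : 𝓗)‖ * ‖v‖ := re_inner_le_norm _ v
    have hnu : ‖u‖ = a := hU t ψ₁
    have hnv : ‖v‖ = 1 := by rw [hv, hU, hnorm]
    rw [hnu] at h1
    rw [hnv, mul_one] at h2
    linarith [hre2 ▸ hre]
  -- pointwise squared bound
  have key2 : ∀ t ∈ Ioc (0 : ℝ) T, (7 * a ^ 2 / 8 : ℝ) ≤
      ‖U t (ψ₁ + ψ₂) - (K.orthogonalProjectionOnto (U t (ψ₁ + ψ₂)) : 𝓗)‖ ^ 2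
        + (8 / a ^ 2) * ‖(K.orthogonalProjectionOnto (U t ψ₁) : 𝓗)‖ ^ 2 := by
    intro t _
    set f := ‖U t (ψ₁ + ψ₂) - (K.orthogonalProjectionOnto (U t (ψ₁ + ψ₂)) : 𝓗)‖ with hf
    set g := ‖(K.orthogonalProjectionOnto (U t ψ₁) : 𝓗)‖ with hg
    have hkey : a ^ 2 ≤ a * f + g := key t
    have hf0 : 0 ≤ f := norm_nonneg _
    have hg0 : 0 ≤ g := norm_nonneg _
    have hd : (8 / a ^ 2 * g ^ 2) * a ^ 2 = 8 * g ^ 2 := by field_simp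
    rcases le_or_gt (a ^ 2) g with hcase | hcase
    · nlinarith [hd, mul_nonneg (sub_nonneg.mpr hcase) ha2.le, sq_nonneg f, ha2,
        sq_nonneg (g - a ^ 2)]
    · have hsq : (a ^ 2 - g) ^ 2 ≤ (a * f) ^ 2 := by
        have h1 : 0 ≤ a * f - (a ^ 2 - g) := by linarith
        have h2 : 0 ≤ a * f + (a ^ 2 - g) := by nlinarith [mul_nonneg ha0.le hf0]
        nlinarith [mul_nonneg h1 h2]
      nlinarith [hd, hsq, sq_nonneg (3 * g - a ^ 2 / 3), ha2, sq_nonneg f]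
  -- integrate
  have hIle : T * (7 * a ^ 2 / 8) ≤
      (∫ t in Ioc (0 : ℝ) T,
        ‖U t (ψ₁ + ψ₂) - (K.orthogonalProjectionOnto (U t (ψ₁ + ψ₂)) : 𝓗)‖ ^ 2)
      + (8 / a ^ 2) * ∫ t in Ioc (0 : ℝ) T, ‖(K.orthogonalProjectionOnto (U t ψ₁) : 𝓗)‖ ^ 2 := by
    have hmono := setIntegral_mono_on (integrableOn_const measure_Ioc_lt_top.ne)
      (hint2.add (hint1.const_mul (8 / a ^ 2))) measurableSet_Ioc key2
    simp only [Pi.add_apply] at hmono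
    rw [setIntegral_const, integral_add hint2 (hint1.const_mul (8 / a ^ 2)),
      integral_const_mul] at hmono
    have hvol : (volume.real (Ioc (0:ℝ) T)) = T := by
      rw [measureReal_def, Real.volume_Ioc, sub_zero, ENNReal.toReal_ofReal hT.le]
    rw [hvol] at hmono
    simpa [smul_eq_mul] using hmono
  set I₁ := ∫ t in Ioc (0 : ℝ) T, ‖(K.orthogonalProjectionOnto (U t ψ₁) : 𝓗)‖ ^ 2 with hI₁
  set I₂ := ∫ t in Ioc (0 : ℝ) T,
      ‖U t (ψ₁ + ψ₂) - (K.orthogonalProjectionOnto (U t (ψ₁ + ψ₂)) : 𝓗)‖ ^ 2 with hI₂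
  have hI1 : I₁ ≤ T * (a ^ 4 / 64) := by
    rw [one_div, inv_mul_le_iff₀ hT] at hbound
    linarith
  have hI1' : (8 / a ^ 2) * I₁ ≤ T * (a ^ 2 / 8) := by
    rw [div_mul_eq_mul_div, div_le_iff₀ ha2]
    nlinarith
  have hI2 : T * (a ^ 2 / 2) ≤ I₂ := by nlinarith
  rw [ge_iff_le, one_div, le_inv_mul_iff₀ hT]
  nlinarith
end

section
/- Let α ∈ (0,1] and let μ be a finite Borel measure on ℝ which is UαH with constant C > 0. Then there exists a constant C₁ > 0, depending only on α and C, such that for every Borel measurable f : ℝ → ℂ with ∫ |f|² dμ < ∞ and every T > 0, (1/T) ∫₀^T | ∫_ℝ e^{−ixt} f(x) dμ(x) |² dt ≤ C₁ (∫ |f|² dμ) T^{−α}. -/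
open MeasureTheory Set
open scoped ENNReal NNReal Real

open intervalIntegral in
private lemma kernel_layercake (μ : Measure ℝ) [IsFiniteMeasure μ]
    {α C : ℝ} (hα0 : 0 < α) (hα1 : α ≤ 1) (hC : 0 < C)
    (hU : ∀ a b : ℝ, μ (Icc a b) ≤ ENNReal.ofReal (C * |b - a| ^ α))
    {a b : ℝ} (ha : 0 < a) (hb : 0 < b)
    (k : ℝ → ℝ) (hk_cont : Continuous k) (hk_nn : ∀ u, 0 ≤ k u)
    (hk_le_a : ∀ u, k u ≤ a) (hk_le_b : ∀ u, u ≠ 0 → k u ≤ b / u ^ 2)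
    (x : ℝ) :
    ∫ y, k (x - y) ∂μ ≤ C * 2 ^ α * b ^ (α / 2) * a ^ (1 - α / 2) / (1 - α / 2) := by
  have hden : (0:ℝ) < 1 - α / 2 := by linarith
  set c3 : ℝ := C * 2 ^ α * b ^ (α / 2) with hc3
  have hc3pos : 0 < c3 := by positivity
  have hg_cont : Continuous fun y => k (x - y) :=
    hk_cont.comp (continuous_const.sub continuous_id)
  have hg_nn : 0 ≤ᵐ[μ] fun y => k (x - y) := ae_of_all _ fun y => hk_nn _
  have hlc : ∫⁻ y, ENNReal.ofReal (k (x - y)) ∂μ = ∫⁻ s in Ioi 0, μ {y | s < k (x - y)} :=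
    lintegral_eq_lintegral_meas_lt μ hg_nn hg_cont.measurable.aemeasurable
  -- pointwise bound on the distribution function
  have hmeas_bound : ∀ s ∈ Ioi (0:ℝ), μ {y | s < k (x - y)} ≤
      (Ioc (0:ℝ) a).indicator (fun s => ENNReal.ofReal (c3 * s ^ (-(α/2)))) s := by
    intro s hs
    have hs0 : (0:ℝ) < s := hs
    by_cases hsa : s ≤ a
    · have hmem : s ∈ Ioc (0:ℝ) a := ⟨hs0, hsa⟩
      rw [indicator_of_mem hmem]
      set r : ℝ := Real.sqrt (b / s) with hr
      have hr0 : 0 ≤ r := Real.sqrt_nonneg _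
      have hsub : {y | s < k (x - y)} ⊆ Icc (x - r) (x + r) := by
        intro y hy
        simp only [mem_setOf_eq] at hy
        have habs : |x - y| ≤ r := by
          rcases eq_or_ne (x - y) 0 with h0 | h0
          · simp [h0, hr0]
          · have h2 : s < b / (x - y) ^ 2 := lt_of_lt_of_le hy (hk_le_b _ h0)
            have hxy2 : (0:ℝ) < (x - y) ^ 2 := by positivity
            have : (x - y) ^ 2 < b / s := by
              rw [lt_div_iff₀ hs0]
              rw [lt_div_iff₀ hxy2] at h2
              linarith [h2]
            calc |x - y| = Real.sqrt ((x - y) ^ 2) := (Real.sqrt_sq_eq_abs _).symm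
              _ ≤ r := Real.sqrt_le_sqrt this.le
        rw [abs_le] at habs
        constructor <;> [linarith [habs.2]; linarith [habs.1]]
      calc μ {y | s < k (x - y)} ≤ μ (Icc (x - r) (x + r)) := measure_mono hsub
        _ ≤ ENNReal.ofReal (C * |x + r - (x - r)| ^ α) := hU _ _
        _ = ENNReal.ofReal (c3 * s ^ (-(α/2))) := by
            congr 1
            have h2r : x + r - (x - r) = 2 * r := by ring
            have hbs : (0:ℝ) ≤ b / s := by positivity
            rw [h2r, abs_of_nonneg (by positivity : (0:ℝ) ≤ 2 * r),
              Real.mul_rpow (by norm_num) hr0, hr, Real.sqrt_eq_rpow,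
              ← Real.rpow_mul hbs, one_div, inv_mul_eq_div,
              Real.div_rpow hb.le hs0.le, Real.rpow_neg hs0.le, hc3]
            ring
    · rw [indicator_of_notMem (fun hmem => hsa hmem.2)]
      refine le_of_eq ?_
      have : {y | s < k (x - y)} = ∅ := by
        ext y
        simp only [mem_setOf_eq, mem_empty_iff_false, iff_false, not_lt]
        exact le_trans (hk_le_a _) (le_of_not_ge hsa)
      rw [this, measure_empty]
  have hind_meas : Measurable ((Ioc (0:ℝ) a).indicator
      (fun s => ENNReal.ofReal (c3 * s ^ (-(α/2))))) := by
    apply Measurable.indicator _ measurableSet_Ioc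
    fun_prop
  have h1 : ∫⁻ s in Ioi 0, μ {y | s < k (x - y)} ≤
      ∫⁻ s in Ioi (0:ℝ), (Ioc (0:ℝ) a).indicator
        (fun s => ENNReal.ofReal (c3 * s ^ (-(α/2)))) s :=
    setLIntegral_mono hind_meas hmeas_bound
  have h2 : ∫⁻ s in Ioi (0:ℝ), (Ioc (0:ℝ) a).indicator
      (fun s => ENNReal.ofReal (c3 * s ^ (-(α/2)))) s
      = ∫⁻ s in Ioc (0:ℝ) a, ENNReal.ofReal (c3 * s ^ (-(α/2))) := by
    rw [lintegral_indicator measurableSet_Ioc, Measure.restrict_restrict measurableSet_Ioc,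
      inter_eq_self_of_subset_left Ioc_subset_Ioi_self]
  have hInt : IntegrableOn (fun s : ℝ => c3 * s ^ (-(α/2))) (Ioc 0 a) := by
    have h := (intervalIntegrable_rpow' (show (-1:ℝ) < -(α/2) by linarith) :
      IntervalIntegrable (fun s : ℝ => s ^ (-(α/2))) volume 0 a)
    rw [intervalIntegrable_iff_integrableOn_Ioc_of_le ha.le] at h
    exact h.const_mul c3
  have hnn' : 0 ≤ᵐ[volume.restrict (Ioc (0:ℝ) a)] fun s : ℝ => c3 * s ^ (-(α/2)) := by
    filter_upwards [ae_restrict_mem measurableSet_Ioc] with s hs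
    have hs0 : (0:ℝ) < s := hs.1
    positivity
  have h3 : ∫⁻ s in Ioc (0:ℝ) a, ENNReal.ofReal (c3 * s ^ (-(α/2)))
      = ENNReal.ofReal (∫ s in Ioc (0:ℝ) a, c3 * s ^ (-(α/2))) :=
    (ofReal_integral_eq_lintegral_ofReal hInt hnn').symm
  have h4 : ∫ s in Ioc (0:ℝ) a, c3 * s ^ (-(α/2)) = c3 * a ^ (1 - α/2) / (1 - α/2) := by
    rw [← integral_of_le ha.le, intervalIntegral.integral_const_mul,
      integral_rpow (Or.inl (by linarith : (-1:ℝ) < -(α/2))),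
      Real.zero_rpow (ne_of_gt (by linarith : (0:ℝ) < -(α/2) + 1)),
      show -(α/2) + 1 = 1 - α/2 by ring]
    ring
  have htot : ∫⁻ y, ENNReal.ofReal (k (x - y)) ∂μ
      ≤ ENNReal.ofReal (c3 * a ^ (1 - α/2) / (1 - α/2)) := by
    rw [hlc]
    calc ∫⁻ s in Ioi 0, μ {y | s < k (x - y)} ≤ _ := h1
      _ = ENNReal.ofReal (c3 * a ^ (1 - α/2) / (1 - α/2)) := by rw [h2, h3, h4]
  rw [integral_eq_lintegral_of_nonneg_ae hg_nn hg_cont.aestronglyMeasurable]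
  exact ENNReal.toReal_le_of_le_ofReal (by positivity) htot



private lemma gauss_kernel_bound (μ : Measure ℝ) [IsFiniteMeasure μ]
    {α C : ℝ} (hα0 : 0 < α) (hα1 : α ≤ 1) (hC : 0 < C)
    (hU : ∀ a b : ℝ, μ (Icc a b) ≤ ENNReal.ofReal (C * |b - a| ^ α))
    {T : ℝ} (hT : 0 < T) (x : ℝ)
    (hKL : ∀ (a b : ℝ), 0 < a → 0 < b →
      ∀ k : ℝ → ℝ, Continuous k → (∀ u, 0 ≤ k u) → (∀ u, k u ≤ a) →
      (∀ u, u ≠ 0 → k u ≤ b / u ^ 2) →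
      ∫ y, k (x - y) ∂μ ≤ C * 2 ^ α * b ^ (α / 2) * a ^ (1 - α / 2) / (1 - α / 2)) :
    ∫ y, Real.sqrt π * T * Real.exp (-((x - y) ^ 2 * T ^ 2) / 4) ∂μ ≤
      (C * 2 ^ α * (4 * Real.sqrt π) ^ (α / 2) * Real.sqrt π ^ (1 - α / 2) / (1 - α / 2))
        * T ^ (1 - α) := by
  have hsπ : 0 < Real.sqrt π := Real.sqrt_pos.2 Real.pi_pos
  have hden : (0:ℝ) < 1 - α / 2 := by linarith
  have key := hKL (Real.sqrt π * T) (4 * Real.sqrt π / T) (by positivity) (by positivity)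
    (fun u => Real.sqrt π * T * Real.exp (-(u ^ 2 * T ^ 2) / 4))
    (by fun_prop)
    (fun u => by positivity)
    (fun u => by
      show Real.sqrt π * T * Real.exp (-(u ^ 2 * T ^ 2) / 4) ≤ Real.sqrt π * T
      have h1 : Real.exp (-(u ^ 2 * T ^ 2) / 4) ≤ 1 :=
        Real.exp_le_one_iff.2 (by nlinarith [sq_nonneg u, sq_nonneg T])
      nlinarith [Real.exp_pos (-(u ^ 2 * T ^ 2) / 4), mul_pos hsπ hT])
    (fun u hu => by
      have hv : (0:ℝ) < u ^ 2 * T ^ 2 / 4 := by positivity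
      have h2 : u ^ 2 * T ^ 2 / 4 < Real.exp (u ^ 2 * T ^ 2 / 4) := by
        nlinarith [Real.add_one_le_exp (u ^ 2 * T ^ 2 / 4)]
      have h3 : Real.exp (-(u ^ 2 * T ^ 2) / 4) ≤ 1 / (u ^ 2 * T ^ 2 / 4) := by
        rw [show -(u ^ 2 * T ^ 2) / 4 = -(u ^ 2 * T ^ 2 / 4) by ring, Real.exp_neg,
          inv_eq_one_div]
        exact one_div_le_one_div_of_le hv h2.le
      have hu2 : (0:ℝ) < u ^ 2 := by positivity
      calc Real.sqrt π * T * Real.exp (-(u ^ 2 * T ^ 2) / 4)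
          ≤ Real.sqrt π * T * (1 / (u ^ 2 * T ^ 2 / 4)) := by
            apply mul_le_mul_of_nonneg_left h3 (by positivity)
        _ = (4 * Real.sqrt π / T) / u ^ 2 := by field_simp)
  have hrw : C * 2 ^ α * (4 * Real.sqrt π / T) ^ (α / 2) * (Real.sqrt π * T) ^ (1 - α / 2)
        / (1 - α / 2)
      = (C * 2 ^ α * (4 * Real.sqrt π) ^ (α / 2) * Real.sqrt π ^ (1 - α / 2) / (1 - α / 2))
        * T ^ (1 - α) := by
    rw [Real.div_rpow (by positivity) hT.le, Real.mul_rpow hsπ.le hT.le]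
    have hTpow : T ^ ((1:ℝ) - α) = T ^ ((1:ℝ) - α / 2) / T ^ (α / 2) := by
      rw [← Real.rpow_sub hT]; congr 1; ring
    rw [hTpow]
    ring
  calc ∫ y, Real.sqrt π * T * Real.exp (-((x - y) ^ 2 * T ^ 2) / 4) ∂μ
      ≤ C * 2 ^ α * (4 * Real.sqrt π / T) ^ (α / 2) * (Real.sqrt π * T) ^ (1 - α / 2)
        / (1 - α / 2) := key
    _ = _ := hrw


set_option maxHeartbeats 1000000 in
/-- **Strichartz estimate.** Let `α ∈ (0,1]` and let `μ` be a finite Borel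
measure on `ℝ` which is uniformly `α`-Hölder with constant `C > 0`. Then there is
`C₁ > 0`, depending only on `α` and `C`, such that for every Borel measurable
`f : ℝ → ℂ` with `∫ |f|² dμ < ∞` and every `T > 0`,
`(1/T) ∫₀^T |∫ e^{−ixt} f(x) dμ(x)|² dt ≤ C₁ (∫ |f|² dμ) T^{−α}`. -/
theorem strichartz_uniformly_holder
    (α : ℝ) (hα : α ∈ Ioc (0 : ℝ) 1)
    (μ : Measure ℝ) [IsFiniteMeasure μ]
    (C : ℝ) (hC : 0 < C)
    (hUαH : ∀ a b : ℝ, μ (Icc a b) ≤ ENNReal.ofReal (C * |b - a| ^ α)) :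
    ∃ C₁ : ℝ, 0 < C₁ ∧
      ∀ f : ℝ → ℂ, Measurable f → (∫⁻ x, (‖f x‖₊ : ℝ≥0∞) ^ 2 ∂μ) < ⊤ →
      ∀ T : ℝ, 0 < T →
        (1 / T) * ∫ t in Ioc (0 : ℝ) T,
            ‖∫ x : ℝ, Complex.exp ((-Complex.I) * ((x : ℂ) * (t : ℂ))) * f x ∂μ‖ ^ 2
          ≤ C₁ * (∫ x, ‖f x‖ ^ 2 ∂μ) * T ^ (-α) := by
  obtain ⟨hα0, hα1⟩ := hα
  have hsπ : 0 < Real.sqrt π := Real.sqrt_pos.2 Real.pi_pos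
  have hden : (0:ℝ) < 1 - α / 2 := by linarith
  set c2 : ℝ := C * 2 ^ α * (4 * Real.sqrt π) ^ (α / 2) * Real.sqrt π ^ (1 - α / 2) / (1 - α / 2)
    with hc2
  have hc2pos : 0 < c2 := by positivity
  refine ⟨Real.exp 1 * c2, by positivity, ?_⟩
  intro f hfm hfl2 T hT
  -- ## L² and L¹ facts
  have hf2 : MemLp f 2 μ := by
    refine ⟨hfm.aestronglyMeasurable, ?_⟩
    rw [eLpNorm_eq_lintegral_rpow_enorm_toReal (by norm_num) (by norm_num)]
    refine ENNReal.rpow_lt_top_of_nonneg (by norm_num) ?_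
    have h2 : ∀ x : ℝ, ‖f x‖ₑ ^ ((2:ℝ≥0∞).toReal) = ‖f x‖ₑ ^ (2:ℕ) := by
      intro x
      rw [ENNReal.toReal_ofNat, ← ENNReal.rpow_natCast]
      norm_num
    simp_rw [h2]
    exact hfl2.ne
  have hfi : Integrable f μ :=
    memLp_one_iff_integrable.mp (hf2.mono_exponent (by norm_num))
  have hsq : Integrable (fun x => ‖f x‖ ^ 2) μ := by
    have h := hf2.integrable_norm_rpow (by norm_num) (by norm_num)
    have h2 : ∀ x : ℝ, ‖f x‖ ^ ((2:ℝ≥0∞).toReal) = ‖f x‖ ^ (2:ℕ) := by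
      intro x
      rw [ENNReal.toReal_ofNat, ← Real.rpow_natCast]
      norm_num
    simpa only [h2] using h
  set Inn := ∫ x, ‖f x‖ ^ 2 ∂μ with hInn
  have hInn0 : 0 ≤ Inn := by rw [hInn]; exact integral_nonneg fun x => by positivity
  -- ## F and its basic properties
  set F : ℝ → ℂ := fun t => ∫ x : ℝ, Complex.exp ((-Complex.I) * ((x : ℂ) * (t : ℂ))) * f x ∂μ
    with hF
  have hshow : (∫ t in Ioc (0:ℝ) T,
      ‖∫ x : ℝ, Complex.exp ((-Complex.I) * ((x : ℂ) * (t : ℂ))) * f x ∂μ‖ ^ 2)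
      = ∫ t in Ioc (0:ℝ) T, ‖F t‖ ^ 2 := by simp only [hF]
  have hnorm1 : ∀ t x : ℝ, ‖Complex.exp ((-Complex.I) * ((x : ℂ) * (t : ℂ))) * f x‖ = ‖f x‖ := by
    intro t x
    rw [norm_mul]
    have h0 : ((-Complex.I) * ((x : ℂ) * (t : ℂ))).re = 0 := by
      simp [← Complex.ofReal_mul]
    rw [Complex.norm_exp, h0, Real.exp_zero, one_mul]
  have hFcont : Continuous F := by
    rw [hF]
    refine continuous_of_dominated (F := fun (t x : ℝ) =>
        Complex.exp ((-Complex.I) * ((x : ℂ) * (t : ℂ))) * f x)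
        (bound := fun x => ‖f x‖) ?_ ?_ hfi.norm ?_
    · intro t
      exact ((Complex.measurable_exp.comp (measurable_const.mul
        (Complex.measurable_ofReal.mul measurable_const))).mul hfm).aestronglyMeasurable
    · intro t; exact ae_of_all _ fun x => (hnorm1 t x).le
    · refine ae_of_all _ fun x => ?_
      exact (Complex.continuous_exp.comp (continuous_const.mul
        (continuous_const.mul Complex.continuous_ofReal))).mul continuous_const
  set M := ∫ x, ‖f x‖ ∂μ with hM
  have hFle : ∀ t : ℝ, ‖F t‖ ≤ M := by
    intro t
    rw [hF, hM]
    refine (norm_integral_le_integral_norm _).trans (le_of_eq ?_)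
    exact integral_congr_ae (ae_of_all _ fun x => hnorm1 t x)
  have hM0 : 0 ≤ M := le_trans (norm_nonneg _) (hFle 0)
  -- ## the Gaussian weight
  set w : ℝ → ℝ := fun t => Real.exp (-(1 / T ^ 2) * t ^ 2) with hw
  have hw_int : Integrable w := by rw [hw]; exact integrable_exp_neg_mul_sq (by positivity)
  have hw_pos : ∀ t, 0 < w t := fun t => by rw [hw]; exact Real.exp_pos _
  -- ## Step 1 : from Ioc 0 T to the weighted integral over ℝ
  have hwF_int : Integrable (fun t => w t * ‖F t‖ ^ 2) volume := by
    refine (hw_int.const_mul (M ^ 2)).mono' ?_ (ae_of_all _ fun t => ?_)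
    · exact (hw_int.aestronglyMeasurable).mul ((hFcont.norm.pow 2).aestronglyMeasurable)
    · rw [Real.norm_eq_abs, abs_of_nonneg (mul_nonneg (hw_pos t).le (by positivity))]
      have h1 := hFle t
      have h2 := norm_nonneg (F t)
      have h3 := (hw_pos t).le
      have h4 : ‖F t‖ ^ 2 ≤ M ^ 2 := by nlinarith
      calc w t * ‖F t‖ ^ 2 ≤ w t * M ^ 2 := mul_le_mul_of_nonneg_left h4 h3
        _ = M ^ 2 * w t := mul_comm _ _
  have step1 : ∫ t in Ioc (0:ℝ) T, ‖F t‖ ^ 2 ≤ Real.exp 1 * ∫ t, w t * ‖F t‖ ^ 2 := by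
    have hploc : ∀ t ∈ Ioc (0:ℝ) T, ‖F t‖ ^ 2 ≤ Real.exp 1 * (w t * ‖F t‖ ^ 2) := by
      intro t ht
      have h1 : (1:ℝ) ≤ Real.exp 1 * w t := by
        rw [hw, ← Real.exp_add]
        refine Real.one_le_exp ?_
        have ht2 : t ^ 2 ≤ T ^ 2 := by nlinarith [ht.1.le, ht.2]
        have hT2 : (0:ℝ) < T ^ 2 := by positivity
        have h5 : (1 / T ^ 2) * t ^ 2 ≤ 1 := by
          rw [div_mul_eq_mul_div, one_mul, div_le_one hT2]; exact ht2
        linarith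
      nlinarith [sq_nonneg ‖F t‖]
    calc ∫ t in Ioc (0:ℝ) T, ‖F t‖ ^ 2
        ≤ ∫ t in Ioc (0:ℝ) T, Real.exp 1 * (w t * ‖F t‖ ^ 2) :=
          setIntegral_mono_on ((hFcont.norm.pow 2).integrableOn_Ioc)
            ((hwF_int.const_mul _).integrableOn) measurableSet_Ioc hploc
      _ ≤ ∫ t, Real.exp 1 * (w t * ‖F t‖ ^ 2) :=
          setIntegral_le_integral (hwF_int.const_mul _)
            (ae_of_all _ fun t => mul_nonneg (Real.exp_pos 1).le
              (mul_nonneg (hw_pos t).le (by positivity)))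
      _ = Real.exp 1 * ∫ t, w t * ‖F t‖ ^ 2 := integral_const_mul _ _
  -- ## the kernel K and its value
  set K : ℝ → ℂ := fun u => ∫ t : ℝ, ((w t : ℝ) : ℂ) *
    Complex.exp ((-Complex.I) * (((u : ℝ) : ℂ) * (t : ℂ))) with hK
  have hbre : 0 < (((1 / T ^ 2 : ℝ) : ℂ)).re := by
    rw [Complex.ofReal_re]; positivity
  have hTne : (T : ℂ) ≠ 0 := Complex.ofReal_ne_zero.2 hT.ne'
  have hKval : ∀ u : ℝ, K u
      = ((Real.sqrt π * T : ℝ) : ℂ) * Complex.exp (((-(u ^ 2 * T ^ 2) / 4 : ℝ) : ℂ)) := by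
    intro u
    have hptw : ∀ s : ℝ, ((w s : ℝ) : ℂ) * Complex.exp ((-Complex.I) * ((u : ℂ) * (s : ℂ)))
        = Complex.exp (Complex.I * (-u : ℂ) * (s : ℂ)) *
          Complex.exp (-(((1 / T ^ 2 : ℝ) : ℂ)) * (s : ℂ) ^ 2) := by
      intro s
      rw [hw, Complex.ofReal_exp, mul_comm]
      congr 2
      · push_cast; ring
      · push_cast; ring
    have h1 : K u = ∫ s : ℝ, Complex.exp (Complex.I * (-u : ℂ) * (s : ℂ)) *
        Complex.exp (-(((1 / T ^ 2 : ℝ) : ℂ)) * (s : ℂ) ^ 2) := by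
      rw [hK]
      exact integral_congr_ae (ae_of_all _ fun s => hptw s)
    have e1 : ((π : ℂ) / (((1 / T ^ 2 : ℝ) : ℂ))) ^ (1 / 2 : ℂ) = ((Real.sqrt π * T : ℝ) : ℂ) := by
      have hb1 : (π : ℂ) / (((1 / T ^ 2 : ℝ) : ℂ)) = ((π * T ^ 2 : ℝ) : ℂ) := by
        push_cast
        field_simp
      rw [hb1, show (1 / 2 : ℂ) = (((1:ℝ)/2 : ℝ) : ℂ) by norm_num,
        ← Complex.ofReal_cpow (by positivity)]
      congr 1
      rw [← Real.sqrt_eq_rpow, Real.sqrt_mul Real.pi_pos.le, Real.sqrt_sq hT.le]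
    have e2 : -((-u : ℂ)) ^ 2 / (4 * (((1 / T ^ 2 : ℝ) : ℂ))) = ((-(u ^ 2 * T ^ 2) / 4 : ℝ) : ℂ) := by
      push_cast
      field_simp <;> ring
    rw [h1, fourierIntegral_gaussian hbre (-u : ℂ), e1, e2]
  -- the real kernel
  set kk : ℝ → ℝ := fun u => Real.sqrt π * T * Real.exp (-(u ^ 2 * T ^ 2) / 4) with hkk
  have hKnorm : ∀ u : ℝ, ‖K u‖ = kk u := by
    intro u
    rw [hKval u, hkk, norm_mul, Complex.norm_real, Real.norm_eq_abs,
      abs_of_nonneg (by positivity), Complex.norm_exp,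
      Complex.ofReal_re]
  have hkk_nn : ∀ u, 0 ≤ kk u := fun u => by rw [hkk]; positivity
  have hkk_le : ∀ u, kk u ≤ Real.sqrt π * T := by
    intro u
    rw [hkk]
    have h1 : Real.exp (-(u ^ 2 * T ^ 2) / 4) ≤ 1 :=
      Real.exp_le_one_iff.2 (by nlinarith [sq_nonneg u, sq_nonneg T])
    nlinarith [Real.exp_pos (-(u ^ 2 * T ^ 2) / 4), mul_pos hsπ hT]
  have hkk_cont : Continuous kk := by
    rw [hkk]
    exact continuous_const.mul (Real.continuous_exp.comp
      ((((continuous_pow 2).mul continuous_const).neg).div_const 4))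
  have hkk_even : ∀ x y : ℝ, kk (x - y) = kk (y - x) := by
    intro x y
    rw [hkk]
    have h : (x - y) ^ 2 = (y - x) ^ 2 := by ring
    simp only [h]
  -- kernel integral bound
  have hker : ∀ c : ℝ, ∫ y, kk (c - y) ∂μ ≤ c2 * T ^ (1 - α) := by
    intro c
    have h := gauss_kernel_bound μ hα0 hα1 hC hUαH hT c
      (fun a b ha hb k hkc hkn hka hkb =>
        kernel_layercake μ hα0 hα1 hC hUαH ha hb k hkc hkn hka hkb c)
    rw [hc2, hkk]
    exact h
  -- ## the product-space function G
  set G : ℝ → ℝ × ℝ → ℂ := fun t p => ((w t : ℝ) : ℂ) *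
      Complex.exp ((-Complex.I) * (((p.1 - p.2 : ℝ) : ℂ) * (t : ℂ))) *
      (f p.1 * (starRingEnd ℂ) (f p.2)) with hG
  have hGnorm : ∀ (t : ℝ) (p : ℝ × ℝ), ‖G t p‖ = w t * (‖f p.1‖ * ‖f p.2‖) := by
    intro t p
    simp only [hG]
    rw [norm_mul, norm_mul, norm_mul]
    have h0 : ((-Complex.I) * (((p.1 - p.2 : ℝ) : ℂ) * (t : ℂ))).re = 0 := by
      simp [← Complex.ofReal_mul]
    rw [Complex.norm_exp, h0, Real.exp_zero,
      Complex.norm_real, Real.norm_eq_abs, abs_of_nonneg (hw_pos t).le, RCLike.norm_conj,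
      mul_one]
  have hGmeas : Measurable (Function.uncurry G) := by
    have hrw : Function.uncurry G = fun q : ℝ × (ℝ × ℝ) =>
        ((w q.1 : ℝ) : ℂ) *
          Complex.exp ((-Complex.I) * (((q.2.1 - q.2.2 : ℝ) : ℂ) * (q.1 : ℂ))) *
          (f q.2.1 * (starRingEnd ℂ) (f q.2.2)) := by
      funext q
      simp only [hG, Function.uncurry]
    rw [hrw]
    have hwm : Measurable w := by
      rw [hw]; exact Real.measurable_exp.comp (measurable_const.mul (measurable_id.pow_const 2))
    refine Measurable.mul (Measurable.mul ?_ ?_) (Measurable.mul ?_ ?_)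
    · exact Complex.measurable_ofReal.comp (hwm.comp measurable_fst)
    · exact Complex.measurable_exp.comp (measurable_const.mul
        ((Complex.measurable_ofReal.comp ((measurable_snd.fst).sub measurable_snd.snd)).mul
          (Complex.measurable_ofReal.comp measurable_fst)))
    · exact hfm.comp measurable_snd.fst
    · exact (RCLike.continuous_conj.measurable.comp (hfm.comp measurable_snd.snd))
  have hGint : Integrable (Function.uncurry G) (volume.prod (μ.prod μ)) := by
    refine (hw_int.mul_prod (hfi.norm.mul_prod hfi.norm)).mono'
      hGmeas.aestronglyMeasurable (ae_of_all _ fun q => ?_)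
    calc ‖Function.uncurry G q‖ = w q.1 * (‖f q.2.1‖ * ‖f q.2.2‖) := hGnorm q.1 q.2
      _ ≤ w q.1 * (‖f q.2.1‖ * ‖f q.2.2‖) := le_refl _
  have hGt_int : ∀ t : ℝ, Integrable (G t) (μ.prod μ) := by
    intro t
    refine ((hfi.norm.mul_prod hfi.norm).const_mul (w t)).mono'
      (hGmeas.of_uncurry_left.aestronglyMeasurable) (ae_of_all _ fun p => ?_)
    calc ‖G t p‖ = w t * (‖f p.1‖ * ‖f p.2‖) := hGnorm t p
      _ ≤ w t * (‖f p.1‖ * ‖f p.2‖) := le_refl _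
  -- pointwise identity for G
  have hGpt : ∀ t x y : ℝ, G t (x, y) = ((w t : ℝ) : ℂ) *
      ((Complex.exp ((-Complex.I) * ((x : ℂ) * (t : ℂ))) * f x) *
        (starRingEnd ℂ) (Complex.exp ((-Complex.I) * ((y : ℂ) * (t : ℂ))) * f y)) := by
    intro t x y
    simp only [hG]
    rw [map_mul, ← Complex.exp_conj]
    have hc : (starRingEnd ℂ) ((-Complex.I) * ((y : ℂ) * (t : ℂ)))
        = Complex.I * ((y : ℂ) * (t : ℂ)) := by
      simp [map_mul, Complex.conj_ofReal]
    rw [hc, show (-Complex.I) * (((x - y : ℝ) : ℂ) * (t : ℂ))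
        = (-Complex.I) * ((x : ℂ) * (t : ℂ)) + Complex.I * ((y : ℂ) * (t : ℂ)) by
      push_cast; ring, Complex.exp_add]
    ring
  have hconjF : ∀ t : ℝ, (starRingEnd ℂ) (F t)
      = ∫ y, (starRingEnd ℂ) (Complex.exp ((-Complex.I) * ((y : ℂ) * (t : ℂ))) * f y) ∂μ := by
    intro t
    rw [integral_conj]
  have hiter : ∀ t : ℝ, ∫ p, G t p ∂(μ.prod μ)
      = ((w t : ℝ) : ℂ) * (F t * (starRingEnd ℂ) (F t)) := by
    intro t
    rw [integral_prod _ (hGt_int t)]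
    have hx : ∀ x : ℝ, ∫ y, G t (x, y) ∂μ
        = ((w t : ℝ) : ℂ) * ((Complex.exp ((-Complex.I) * ((x : ℂ) * (t : ℂ))) * f x) *
            (starRingEnd ℂ) (F t)) := by
      intro x
      rw [hconjF t, ← integral_const_mul, ← integral_const_mul]
      exact integral_congr_ae (ae_of_all _ fun y => hGpt t x y)
    calc ∫ x, ∫ y, G t (x, y) ∂μ ∂μ
        = ∫ x, ((w t : ℝ) : ℂ) * ((Complex.exp ((-Complex.I) * ((x : ℂ) * (t : ℂ))) * f x) *
            (starRingEnd ℂ) (F t)) ∂μ := integral_congr_ae (ae_of_all _ hx)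
      _ = ((w t : ℝ) : ℂ) * (F t * (starRingEnd ℂ) (F t)) := by
          rw [integral_const_mul, integral_mul_const]
  have hinner : ∀ p : ℝ × ℝ, (∫ t, G t p)
      = K (p.1 - p.2) * (f p.1 * (starRingEnd ℂ) (f p.2)) := by
    intro p
    simp only [hG]
    rw [integral_mul_const]
  have hmulconj : ∀ t : ℝ, ((w t * ‖F t‖ ^ 2 : ℝ) : ℂ)
      = ((w t : ℝ) : ℂ) * (F t * (starRingEnd ℂ) (F t)) := by
    intro t
    rw [Complex.ofReal_mul]
    congr 1
    rw [Complex.mul_conj, Complex.normSq_eq_norm_sq]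
  have hwFC_int : Integrable (fun t => ((w t : ℝ) : ℂ) * (F t * (starRingEnd ℂ) (F t)))
      volume := by
    have h := hwF_int.ofReal (𝕜 := ℂ)
    exact h.congr (ae_of_all _ fun t => hmulconj t)
  have hchain : ∫ t, ((w t : ℝ) : ℂ) * (F t * (starRingEnd ℂ) (F t))
      = ∫ p, K (p.1 - p.2) * (f p.1 * (starRingEnd ℂ) (f p.2)) ∂(μ.prod μ) := by
    calc ∫ t, ((w t : ℝ) : ℂ) * (F t * (starRingEnd ℂ) (F t))
        = ∫ t, ∫ p, G t p ∂(μ.prod μ) :=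
          integral_congr_ae (ae_of_all _ fun t => (hiter t).symm)
      _ = ∫ p, (∫ t, G t p) ∂(μ.prod μ) := integral_integral_swap hGint
      _ = ∫ p, K (p.1 - p.2) * (f p.1 * (starRingEnd ℂ) (f p.2)) ∂(μ.prod μ) :=
          integral_congr_ae (ae_of_all _ fun p => hinner p)
  have hreal : ∫ t, w t * ‖F t‖ ^ 2
      = (∫ p, K (p.1 - p.2) * (f p.1 * (starRingEnd ℂ) (f p.2)) ∂(μ.prod μ)).re := by
    have h2 : ∫ t, (((w t : ℝ) : ℂ) * (F t * (starRingEnd ℂ) (F t))).re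
        = (∫ t, ((w t : ℝ) : ℂ) * (F t * (starRingEnd ℂ) (F t))).re :=
      Complex.reCLM.integral_comp_comm hwFC_int
    have hptre : ∀ t : ℝ, w t * ‖F t‖ ^ 2
        = (((w t : ℝ) : ℂ) * (F t * (starRingEnd ℂ) (F t))).re := by
      intro t
      rw [← hmulconj t, Complex.ofReal_re]
    calc ∫ t, w t * ‖F t‖ ^ 2
        = ∫ t, (((w t : ℝ) : ℂ) * (F t * (starRingEnd ℂ) (F t))).re :=
          integral_congr_ae (ae_of_all _ hptre)
      _ = (∫ t, ((w t : ℝ) : ℂ) * (F t * (starRingEnd ℂ) (F t))).re := h2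
      _ = _ := by rw [hchain]
  -- ## the quadratic majorant
  set ψ1 : ℝ × ℝ → ℝ := fun p => ‖f p.1‖ ^ 2 / 2 * kk (p.1 - p.2) with hψ1def
  set ψ2 : ℝ × ℝ → ℝ := fun p => ‖f p.2‖ ^ 2 / 2 * kk (p.1 - p.2) with hψ2def
  have hψ1meas : AEStronglyMeasurable ψ1 (μ.prod μ) := by
    refine Measurable.aestronglyMeasurable ?_
    simp only [hψ1def]
    exact (((hfm.comp measurable_fst).norm.pow_const 2).div_const 2).mul
      (hkk_cont.measurable.comp (measurable_fst.sub measurable_snd))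
  have hψ2meas : AEStronglyMeasurable ψ2 (μ.prod μ) := by
    refine Measurable.aestronglyMeasurable ?_
    simp only [hψ2def]
    exact (((hfm.comp measurable_snd).norm.pow_const 2).div_const 2).mul
      (hkk_cont.measurable.comp (measurable_fst.sub measurable_snd))
  have hψ1int : Integrable ψ1 (μ.prod μ) := by
    refine (((hsq.div_const 2).mul_prod (integrable_const (1:ℝ))).const_mul
      (Real.sqrt π * T)).mono' hψ1meas (ae_of_all _ fun p => ?_)
    rw [Real.norm_eq_abs, abs_of_nonneg (mul_nonneg (by positivity) (hkk_nn _))]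
    calc ‖f p.1‖ ^ 2 / 2 * kk (p.1 - p.2)
        ≤ ‖f p.1‖ ^ 2 / 2 * (Real.sqrt π * T) :=
          mul_le_mul_of_nonneg_left (hkk_le _) (by positivity)
      _ = Real.sqrt π * T * (‖f p.1‖ ^ 2 / 2 * 1) := by ring
  have hψ2int : Integrable ψ2 (μ.prod μ) := by
    refine ((((integrable_const (1:ℝ))).mul_prod (hsq.div_const 2)).const_mul
      (Real.sqrt π * T)).mono' hψ2meas (ae_of_all _ fun p => ?_)
    rw [Real.norm_eq_abs, abs_of_nonneg (mul_nonneg (by positivity) (hkk_nn _))]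
    calc ‖f p.2‖ ^ 2 / 2 * kk (p.1 - p.2)
        ≤ ‖f p.2‖ ^ 2 / 2 * (Real.sqrt π * T) :=
          mul_le_mul_of_nonneg_left (hkk_le _) (by positivity)
      _ = Real.sqrt π * T * (1 * (‖f p.2‖ ^ 2 / 2)) := by ring
  have hΦle : ∀ p : ℝ × ℝ, ‖K (p.1 - p.2) * (f p.1 * (starRingEnd ℂ) (f p.2))‖
      ≤ ψ1 p + ψ2 p := by
    intro p
    rw [norm_mul, norm_mul, hKnorm, RCLike.norm_conj]
    simp only [hψ1def, hψ2def]
    have h1 := two_mul_le_add_sq ‖f p.1‖ ‖f p.2‖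
    have h2 := hkk_nn (p.1 - p.2)
    nlinarith [mul_nonneg h2 (sub_nonneg.2 h1)]
  have hhalf1 : ∫ p, ψ1 p ∂(μ.prod μ) ≤ c2 * T ^ (1 - α) / 2 * Inn := by
    rw [integral_prod _ hψ1int]
    have hnn : ∀ x : ℝ, 0 ≤ ∫ y, ψ1 (x, y) ∂μ := fun x => integral_nonneg fun y =>
      mul_nonneg (by positivity) (hkk_nn _)
    have hub : ∀ x : ℝ, ∫ y, ψ1 (x, y) ∂μ ≤ ‖f x‖ ^ 2 / 2 * (c2 * T ^ (1 - α)) := by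
      intro x
      have he : ∫ y, ψ1 (x, y) ∂μ = ‖f x‖ ^ 2 / 2 * ∫ y, kk (x - y) ∂μ := by
        simp only [hψ1def]
        exact integral_const_mul _ _
      rw [he]
      exact mul_le_mul_of_nonneg_left (hker x) (by positivity)
    calc ∫ x, ∫ y, ψ1 (x, y) ∂μ ∂μ
        ≤ ∫ x, ‖f x‖ ^ 2 / 2 * (c2 * T ^ (1 - α)) ∂μ :=
          integral_mono_of_nonneg (ae_of_all _ hnn)
            ((hsq.div_const 2).mul_const _) (ae_of_all _ hub)
      _ = c2 * T ^ (1 - α) / 2 * Inn := by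
          rw [integral_mul_const, integral_div, hInn]
          ring
  have hhalf2 : ∫ p, ψ2 p ∂(μ.prod μ) ≤ c2 * T ^ (1 - α) / 2 * Inn := by
    rw [integral_prod_symm _ hψ2int]
    have hnn : ∀ y : ℝ, 0 ≤ ∫ x, ψ2 (x, y) ∂μ := fun y => integral_nonneg fun x =>
      mul_nonneg (by positivity) (hkk_nn _)
    have hub : ∀ y : ℝ, ∫ x, ψ2 (x, y) ∂μ ≤ ‖f y‖ ^ 2 / 2 * (c2 * T ^ (1 - α)) := by
      intro y
      have he : ∫ x, ψ2 (x, y) ∂μ = ‖f y‖ ^ 2 / 2 * ∫ x, kk (y - x) ∂μ := by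
        calc ∫ x, ψ2 (x, y) ∂μ = ∫ x, ‖f y‖ ^ 2 / 2 * kk (y - x) ∂μ :=
            integral_congr_ae (ae_of_all _ fun x => by
              simp only [hψ2def]; rw [hkk_even])
          _ = ‖f y‖ ^ 2 / 2 * ∫ x, kk (y - x) ∂μ := integral_const_mul _ _
      rw [he]
      exact mul_le_mul_of_nonneg_left (hker y) (by positivity)
    calc ∫ y, ∫ x, ψ2 (x, y) ∂μ ∂μ
        ≤ ∫ y, ‖f y‖ ^ 2 / 2 * (c2 * T ^ (1 - α)) ∂μ :=
          integral_mono_of_nonneg (ae_of_all _ hnn)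
            ((hsq.div_const 2).mul_const _) (ae_of_all _ hub)
      _ = c2 * T ^ (1 - α) / 2 * Inn := by
          rw [integral_mul_const, integral_div, hInn]
          ring
  have hstep2 : (∫ p, K (p.1 - p.2) * (f p.1 * (starRingEnd ℂ) (f p.2)) ∂(μ.prod μ)).re
      ≤ c2 * T ^ (1 - α) * Inn := by
    calc (∫ p, K (p.1 - p.2) * (f p.1 * (starRingEnd ℂ) (f p.2)) ∂(μ.prod μ)).re
        ≤ ‖∫ p, K (p.1 - p.2) * (f p.1 * (starRingEnd ℂ) (f p.2)) ∂(μ.prod μ)‖ :=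
          Complex.re_le_norm _
      _ = ‖∫ p, K (p.1 - p.2) * (f p.1 * (starRingEnd ℂ) (f p.2)) ∂(μ.prod μ)‖ :=
          rfl
      _ ≤ ∫ p, ‖K (p.1 - p.2) * (f p.1 * (starRingEnd ℂ) (f p.2))‖ ∂(μ.prod μ) :=
          norm_integral_le_integral_norm _
      _ ≤ ∫ p, (ψ1 p + ψ2 p) ∂(μ.prod μ) :=
          integral_mono_of_nonneg (ae_of_all _ fun p => norm_nonneg _)
            (hψ1int.add hψ2int) (ae_of_all _ hΦle)
      _ = (∫ p, ψ1 p ∂(μ.prod μ)) + ∫ p, ψ2 p ∂(μ.prod μ) := integral_add hψ1int hψ2int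
      _ ≤ c2 * T ^ (1 - α) / 2 * Inn + c2 * T ^ (1 - α) / 2 * Inn := add_le_add hhalf1 hhalf2
      _ = c2 * T ^ (1 - α) * Inn := by ring
  -- ## final assembly
  have hwFnn : 0 ≤ ∫ t, w t * ‖F t‖ ^ 2 :=
    integral_nonneg fun t => mul_nonneg (hw_pos t).le (by positivity)
  rw [hshow]
  calc (1 / T) * ∫ t in Ioc (0:ℝ) T, ‖F t‖ ^ 2
      ≤ (1 / T) * (Real.exp 1 * ∫ t, w t * ‖F t‖ ^ 2) := by
        apply mul_le_mul_of_nonneg_left step1 (by positivity)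
    _ ≤ (1 / T) * (Real.exp 1 * (c2 * T ^ (1 - α) * Inn)) := by
        have h2 : ∫ t, w t * ‖F t‖ ^ 2 ≤ c2 * T ^ (1 - α) * Inn := by
          rw [hreal]; exact hstep2
        exact mul_le_mul_of_nonneg_left
          (mul_le_mul_of_nonneg_left h2 (Real.exp_pos 1).le) (by positivity)
    _ = Real.exp 1 * c2 * Inn * T ^ (-α) := by
        rw [show (1:ℝ) - α = 1 + (-α) by ring, Real.rpow_add hT, Real.rpow_one]
        field_simp
end

section
/- Let α ∈ (0,1] and let μ be a finite Borel measure on ℝ. Then μ is α-continuous if and only if for every ε > 0 there exist finite Borel measures μ₁ and μ₂ on ℝ, mutually singular, such that μ = μ₁ + μ₂, μ₁ is UαH with some constant C > 0, and μ₂(ℝ) < ε. -/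
open MeasureTheory Set
open scoped ENNReal NNReal
open Metric Filter
open scoped Topology

private def rtBad (μ : Measure ℝ) (α t δ : ℝ) : Set ℝ :=
  {x | ∃ r : ℝ, 0 < r ∧ r < δ ∧ ENNReal.ofReal (t * (2 * r) ^ α) < μ (closedBall x r)}

private lemma rtBad_isOpen (μ : Measure ℝ) {α : ℝ} (hα : 0 ≤ α) (t δ : ℝ) :
    IsOpen (rtBad μ α t δ) := by
  rw [Metric.isOpen_iff]
  rintro x ⟨r, hr0, hrδ, hx⟩
  have hcont : Tendsto (fun d : ℝ => ENNReal.ofReal (t * (2 * (r + d)) ^ α)) (𝓝[>] 0)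
      (𝓝 (ENNReal.ofReal (t * (2 * r) ^ α))) := by
    have hc : Continuous fun d : ℝ => t * (2 * (r + d)) ^ α :=
      continuous_const.mul ((continuous_const.mul (continuous_const.add continuous_id)).rpow_const
        (fun _ => Or.inr hα))
    have := (ENNReal.continuous_ofReal.comp hc).tendsto 0
    simpa [Function.comp_def] using this.mono_left nhdsWithin_le_nhds
  have hev : ∀ᶠ d in 𝓝[>] (0:ℝ),
      ENNReal.ofReal (t * (2 * (r + d)) ^ α) < μ (closedBall x r) :=
    hcont.eventually_lt_const hx
  have hmem : Ioo (0:ℝ) (δ - r) ∈ 𝓝[>] (0:ℝ) :=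
    Ioo_mem_nhdsGT_of_mem ⟨le_rfl, sub_pos.2 hrδ⟩
  obtain ⟨d, hd1, hd2⟩ := (hev.and (Filter.eventually_of_mem hmem (fun z hz => hz))).exists
  refine ⟨d, hd2.1, fun y hy => ?_⟩
  refine ⟨r + d, by linarith [hd2.1], by linarith [hd2.2], lt_of_lt_of_le hd1 ?_⟩
  apply measure_mono
  apply closedBall_subset_closedBall'
  have h1 : dist x y < d := mem_ball'.1 hy
  have h2 : dist y x = dist x y := dist_comm y x
  linarith

private lemma rtBad_vitali (μ : Measure ℝ) [IsFiniteMeasure μ] {α t δ : ℝ} (hα0 : 0 < α)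
    (ht : 0 < t) (hδ : 0 < δ) :
    ∃ (u : Set ℝ) (rad : ℝ → ℝ), u.Countable ∧
      (∀ b ∈ u, 0 < rad b ∧ rad b < δ) ∧
      (rtBad μ α t δ ⊆ ⋃ b ∈ u, closedBall b (4 * rad b)) ∧
      (∑' b : u, Metric.ediam (closedBall (b : ℝ) (4 * rad b)) ^ α
        ≤ ENNReal.ofReal (4 ^ α / t) * μ univ) := by
  classical
  set B := rtBad μ α t δ with hB
  have hrad : ∀ x : ℝ, ∃ r : ℝ, x ∈ B → (0 < r ∧ r < δ ∧
      ENNReal.ofReal (t * (2 * r) ^ α) < μ (closedBall x r)) := by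
    intro x
    by_cases hx : x ∈ B
    · obtain ⟨r, h⟩ := hx
      exact ⟨r, fun _ => h⟩
    · exact ⟨1, fun h => absurd h hx⟩
  choose rad hradp using hrad
  obtain ⟨u, hu_sub, hu_disj, hu_cov⟩ :=
    Vitali.exists_disjoint_subfamily_covering_enlargement_closedBall B id rad δ
      (fun a ha => ((hradp a) ha).2.1.le) 4 (by norm_num)
  simp only [id_eq] at hu_disj hu_cov
  have hub : ∀ b ∈ u, 0 < rad b ∧ rad b < δ := by
    intro b hb
    exact ⟨(hradp b (hu_sub hb)).1, (hradp b (hu_sub hb)).2.1⟩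
  have hcount : u.Countable := by
    apply hu_disj.countable_of_nonempty_interior
    intro b hb
    rw [interior_closedBall _ (hub b hb).1.ne']
    exact ⟨b, mem_ball_self (hub b hb).1⟩
  refine ⟨u, rad, hcount, hub, ?_, ?_⟩
  · intro a ha
    obtain ⟨b, hb, hsub⟩ := hu_cov a ha
    have : a ∈ closedBall (id a) (rad a) := mem_closedBall_self (hradp a ha).1.le
    exact mem_biUnion hb (hsub this)
  · have hdiam : ∀ b ∈ u, Metric.ediam (closedBall (b : ℝ) (4 * rad b)) ^ α
        = ENNReal.ofReal ((8 * rad b) ^ α) := by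
      intro b hb
      have hr : 0 < rad b := (hub b hb).1
      rw [Real.closedBall_eq_Icc, Real.ediam_Icc]
      have h8 : b + 4 * rad b - (b - 4 * rad b) = 8 * rad b := by ring
      rw [h8, ← ENNReal.ofReal_rpow_of_nonneg (by positivity) hα0.le]
    calc ∑' b : u, Metric.ediam (closedBall (b : ℝ) (4 * rad b)) ^ α
        = ∑' b : u, ENNReal.ofReal ((8 * rad (b : ℝ)) ^ α) := by
          exact tsum_congr fun b => hdiam b b.2
      _ ≤ ∑' b : u, ENNReal.ofReal (4 ^ α / t) * μ (closedBall (b : ℝ) (rad b)) := by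
          refine ENNReal.tsum_le_tsum fun b => ?_
          have hr : 0 < rad (b : ℝ) := (hradp (b : ℝ) (hu_sub b.2)).1
          have h8 : (8 * rad (b : ℝ)) ^ α = (4 ^ α / t) * (t * (2 * rad (b : ℝ)) ^ α) := by
            have h9 : (8 : ℝ) * rad (b : ℝ) = 4 * (2 * rad (b : ℝ)) := by ring
            rw [h9, Real.mul_rpow (by norm_num) (by positivity)]
            field_simp
          rw [h8, ENNReal.ofReal_mul (by positivity)]
          exact mul_le_mul_right (hradp (b : ℝ) (hu_sub b.2)).2.2.le _
      _ = ENNReal.ofReal (4 ^ α / t) * ∑' b : u, μ (closedBall (b : ℝ) (rad b)) := by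
          rw [ENNReal.tsum_mul_left]
      _ ≤ ENNReal.ofReal (4 ^ α / t) * μ univ := by
          gcongr
          rw [← measure_biUnion hcount hu_disj (fun b _ => measurableSet_closedBall)]
          exact measure_mono (subset_univ _)

private lemma rtBad_hausdorff (μ : Measure ℝ) [IsFiniteMeasure μ] {α : ℝ} (hα0 : 0 < α) :
    μH[α] (⋂ n : ℕ, rtBad μ α ((n : ℝ) + 1) (1 / ((n : ℝ) + 1))) = 0 := by
  classical
  have hsel : ∀ n : ℕ, ∃ (u : Set ℝ) (rad : ℝ → ℝ), u.Countable ∧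
      (∀ b ∈ u, 0 < rad b ∧ rad b < 1 / ((n : ℝ) + 1)) ∧
      (rtBad μ α ((n : ℝ) + 1) (1 / ((n : ℝ) + 1)) ⊆ ⋃ b ∈ u, closedBall b (4 * rad b)) ∧
      (∑' b : u, Metric.ediam (closedBall (b : ℝ) (4 * rad b)) ^ α
        ≤ ENNReal.ofReal (4 ^ α / ((n : ℝ) + 1)) * μ univ) := by
    intro n
    exact rtBad_vitali μ hα0 (by positivity) (by positivity)
  choose u rad hcount hub hcov hsum using hsel
  haveI : ∀ n, Countable ↥(u n) := fun n => (hcount n).to_subtype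
  have hle := MeasureTheory.Measure.hausdorffMeasure_le_liminf_tsum (X := ℝ) α
    (⋂ n : ℕ, rtBad μ α ((n : ℝ) + 1) (1 / ((n : ℝ) + 1)))
    (fun n : ℕ => ENNReal.ofReal (8 / ((n : ℝ) + 1)))
    (by
      have h0 : Tendsto (fun n : ℕ => 8 / ((n : ℝ) + 1)) atTop (𝓝 0) := by
        simpa [div_eq_mul_inv] using ((tendsto_one_div_add_atTop_nhds_zero_nat (𝕜 := ℝ)).const_mul (8:ℝ))
      have := (ENNReal.continuous_ofReal.tendsto 0).comp h0
      simpa [Function.comp_def] using this)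
    (fun n (b : u n) => closedBall (b : ℝ) (4 * rad n b))
    (by
      filter_upwards with n
      intro b
      have hr := hub n b b.2
      rw [Real.closedBall_eq_Icc, Real.ediam_Icc]
      refine ENNReal.ofReal_le_ofReal ?_
      have h2 := hr.2
      have h3 : (8:ℝ)/((n:ℝ)+1) = 8 * (1/((n:ℝ)+1)) := by ring
      rw [h3]; linarith)
    (by
      filter_upwards with n
      refine (iInter_subset _ n).trans ?_
      intro x hx
      obtain ⟨b, hb, hxb⟩ := mem_iUnion₂.1 (hcov n hx)
      exact mem_iUnion.2 ⟨⟨b, hb⟩, hxb⟩)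
  refine le_antisymm (hle.trans ?_) zero_le
  have h2 : Tendsto (fun n : ℕ => ENNReal.ofReal (4 ^ α / ((n : ℝ) + 1)) * μ univ)
      atTop (𝓝 0) := by
    have h0 : Tendsto (fun n : ℕ => 4 ^ α / ((n : ℝ) + 1)) atTop (𝓝 0) := by
      simpa [div_eq_mul_inv] using ((tendsto_one_div_add_atTop_nhds_zero_nat (𝕜 := ℝ)).const_mul ((4:ℝ) ^ α))
    have h1 : Tendsto (fun n : ℕ => ENNReal.ofReal (4 ^ α / ((n : ℝ) + 1))) atTop (𝓝 0) := by
      have := (ENNReal.continuous_ofReal.tendsto 0).comp h0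
      simpa [Function.comp_def] using this
    simpa using ENNReal.Tendsto.mul_const h1 (Or.inr (measure_ne_top μ univ))
  calc liminf (fun n => ∑' (b : u n), Metric.ediam (closedBall (b : ℝ) (4 * rad n b)) ^ α) atTop
      ≤ liminf (fun n : ℕ => ENNReal.ofReal (4 ^ α / ((n : ℝ) + 1)) * μ univ) atTop :=
        liminf_le_liminf (Filter.Eventually.of_forall hsum)
    _ = 0 := h2.liminf_eq

private lemma holder_null {α : ℝ} (hα0 : 0 < α) (μ₁ : Measure ℝ) {C : ℝ} (hC : 0 < C)
    (hH : ∀ a b : ℝ, μ₁ (Icc a b) ≤ ENNReal.ofReal (C * |b - a| ^ α))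
    {A : Set ℝ} (hA : μH[α] A = 0) : μ₁ A = 0 := by
  set c : ℝ≥0∞ := ENNReal.ofReal (2 ^ α * C) with hcdef
  have hc0 : c ≠ 0 := ne_of_gt (ENNReal.ofReal_pos.2 (by positivity))
  have hctop : c ≠ ⊤ := ENNReal.ofReal_ne_top
  have hle : c⁻¹ • μ₁ ≤ μH[α] := by
    refine MeasureTheory.Measure.le_hausdorffMeasure α _ ⊤ (by simp) (fun s _ => ?_)
    rcases eq_or_ne (Metric.ediam s) ⊤ with hd | hd
    · rw [hd, ENNReal.top_rpow_of_pos hα0]; exact le_top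
    rcases s.eq_empty_or_nonempty with rfl | ⟨x, hx⟩
    · simp
    set d := (Metric.ediam s).toReal with hdef
    have hd0 : 0 ≤ d := ENNReal.toReal_nonneg
    have hsub : s ⊆ Icc (x - d) (x + d) := by
      intro y hy
      have h1 : edist y x ≤ Metric.ediam s := EMetric.edist_le_diam_of_mem hy hx
      have h2 : dist y x ≤ d := by
        rw [dist_edist]
        exact ENNReal.toReal_mono hd h1
      rw [Real.dist_eq] at h2
      have h3 := abs_le.1 h2
      exact ⟨by linarith [h3.1], by linarith [h3.2]⟩
    have h3 : μ₁ s ≤ ENNReal.ofReal (C * |(x + d) - (x - d)| ^ α) :=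
      le_trans (measure_mono hsub) (hH _ _)
    have h4 : |(x + d) - (x - d)| = 2 * d := by
      rw [show (x + d) - (x - d) = 2 * d by ring, abs_of_nonneg (by linarith)]
    have h5 : C * (2 * d) ^ α = (2 ^ α * C) * d ^ α := by
      rw [Real.mul_rpow (by norm_num) hd0]; ring
    have h6 : Metric.ediam s ^ α = ENNReal.ofReal (d ^ α) := by
      rw [← ENNReal.ofReal_rpow_of_nonneg hd0 hα0.le, ENNReal.ofReal_toReal hd]
    rw [Measure.smul_apply, smul_eq_mul, h6, ENNReal.inv_mul_le_iff hc0 hctop,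
      hcdef, ← ENNReal.ofReal_mul (by positivity)]
    rw [h4, h5] at h3
    exact h3
  have h7 : (c⁻¹ • μ₁) A ≤ μH[α] A := hle A
  rw [hA, nonpos_iff_eq_zero, Measure.smul_apply, smul_eq_mul, mul_eq_zero] at h7
  rcases h7 with h7 | h7
  · exact absurd h7 (ENNReal.inv_ne_zero.2 hctop)
  · exact h7


/-- **Rogers–Taylor decomposition.** Let `α ∈ (0,1]` and `μ` a finite Borel
measure on `ℝ`. Then `μ` is `α`-continuous (gives zero weight to every Borel set of zero
`α`-dimensional Hausdorff measure) if and only if for every `ε > 0` there are mutually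
singular finite Borel measures `μ₁, μ₂` with `μ = μ₁ + μ₂`, `μ₁` uniformly `α`-Hölder
with some constant `C > 0`, and `μ₂(ℝ) < ε`. -/
theorem alpha_continuous_iff_UalphaHolder_decomposition
    (α : ℝ) (hα : α ∈ Ioc (0 : ℝ) 1)
    (μ : Measure ℝ) [IsFiniteMeasure μ] :
    (∀ A : Set ℝ, MeasurableSet A → μH[α] A = 0 → μ A = 0) ↔
      (∀ ε : ℝ, 0 < ε →
        ∃ (μ₁ μ₂ : Measure ℝ), IsFiniteMeasure μ₁ ∧ IsFiniteMeasure μ₂ ∧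
          μ₁.MutuallySingular μ₂ ∧ μ = μ₁ + μ₂ ∧
          (∃ C : ℝ, 0 < C ∧ ∀ a b : ℝ, μ₁ (Icc a b) ≤ ENNReal.ofReal (C * |b - a| ^ α)) ∧
          μ₂ univ < ENNReal.ofReal ε) := by
  obtain ⟨hα0, hα1⟩ := hα
  constructor
  · intro h ε hε
    set Bn : ℕ → Set ℝ := fun n => rtBad μ α ((n : ℝ) + 1) (1 / ((n : ℝ) + 1)) with hBn
    have hmeas : ∀ n, MeasurableSet (Bn n) := fun n =>
      (rtBad_isOpen μ hα0.le _ _).measurableSet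
    have hanti : Antitone Bn := by
      intro m k hmk x hx
      obtain ⟨r, h1, h2, h3⟩ := hx
      have hcast : (m : ℝ) + 1 ≤ (k : ℝ) + 1 := by exact_mod_cast Nat.succ_le_succ hmk
      refine ⟨r, h1, lt_of_lt_of_le h2 (one_div_le_one_div_of_le (by positivity) hcast),
        lt_of_le_of_lt (ENNReal.ofReal_le_ofReal ?_) h3⟩
      exact mul_le_mul_of_nonneg_right hcast (Real.rpow_nonneg (by linarith) α)
    have hN0 : μ (⋂ n, Bn n) = 0 :=
      h _ (MeasurableSet.iInter fun n => hmeas n) (rtBad_hausdorff μ hα0)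
    have htend : Tendsto (fun n => μ (Bn n)) atTop (𝓝 0) := by
      have := tendsto_measure_iInter_atTop (μ := μ)
        (fun n => (hmeas n).nullMeasurableSet) hanti ⟨0, measure_ne_top _ _⟩
      rw [hN0] at this
      exact this
    obtain ⟨n, hn⟩ := (htend.eventually_lt_const (ENNReal.ofReal_pos.2 hε)).exists
    set G := (Bn n)ᶜ with hG
    refine ⟨μ.restrict G, μ.restrict (Bn n), inferInstance, inferInstance, ?_, ?_, ?_, ?_⟩
    · refine ⟨Bn n, hmeas n, ?_, ?_⟩
      · rw [Measure.restrict_apply (hmeas n)]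
        simp [hG]
      · rw [Measure.restrict_apply (hmeas n).compl]
        simp [hG]
    · simpa [hG, compl_compl] using
        (Measure.restrict_add_restrict_compl (μ := μ) (hmeas n).compl).symm
    · set T : ℝ := (n : ℝ) + 1 with hT'
      have hT : 0 < T := by positivity
      set M : ℝ := (μ univ).toReal with hM'
      have hM : 0 ≤ M := ENNReal.toReal_nonneg
      refine ⟨T * 2 ^ α + M * T ^ α + 1, by positivity, fun a b => ?_⟩
      have hGpt : ∀ x ∈ G, ∀ r : ℝ, 0 < r → r < 1 / T →
          μ (closedBall x r) ≤ ENNReal.ofReal (T * (2 * r) ^ α) := by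
        intro x hx r h1 h2
        by_contra hcon
        exact hx ⟨r, h1, h2, not_le.1 hcon⟩
      rcases lt_or_ge b a with hba | hab
      · rw [Icc_eq_empty (not_le.2 hba)]
        simp
      have habs : |b - a| = b - a := abs_of_nonneg (by linarith)
      rw [Measure.restrict_apply measurableSet_Icc, habs]
      set L : ℝ := b - a with hL'
      have hL0 : 0 ≤ L := by simp only [hL']; linarith
      by_cases hne : (Icc a b ∩ G).Nonempty
      · obtain ⟨x, hxI, hxG⟩ := hne
        rcases lt_or_ge L (1 / T) with hLδ | hLδ
        · have key : ∀ d ∈ Ioo (0 : ℝ) (1 / T - L),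
              μ (Icc a b ∩ G) ≤ ENNReal.ofReal (T * (2 * (L + d)) ^ α) := by
            intro d hd
            refine le_trans (measure_mono ?_)
              (hGpt x hxG (L + d) (by linarith [hd.1]) (by linarith [hd.2]))
            refine inter_subset_left.trans ?_
            intro y hy
            rw [mem_closedBall, Real.dist_eq]
            refine abs_le.2 ⟨?_, ?_⟩
            · have := hy.1; have := hxI.2; simp only [hL']; linarith [hd.1]
            · have := hy.2; have := hxI.1; simp only [hL']; linarith [hd.1]
          have hcont : Tendsto (fun d : ℝ => ENNReal.ofReal (T * (2 * (L + d)) ^ α)) (𝓝[>] 0)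
              (𝓝 (ENNReal.ofReal (T * (2 * L) ^ α))) := by
            have hc : Continuous fun d : ℝ => T * (2 * (L + d)) ^ α :=
              continuous_const.mul ((continuous_const.mul
                (continuous_const.add continuous_id)).rpow_const (fun _ => Or.inr hα0.le))
            have := (ENNReal.continuous_ofReal.comp hc).tendsto 0
            simpa [Function.comp_def] using this.mono_left nhdsWithin_le_nhds
          have hlim : μ (Icc a b ∩ G) ≤ ENNReal.ofReal (T * (2 * L) ^ α) := by
            refine ge_of_tendsto hcont ?_
            filter_upwards [Ioo_mem_nhdsGT_of_mem (show (0:ℝ) ∈ Ico (0:ℝ) (1 / T - L) from ⟨le_rfl, by simp only [hL']; linarith⟩)] with d hd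
            exact key d hd
          refine hlim.trans (ENNReal.ofReal_le_ofReal ?_)
          have he : T * (2 * L) ^ α = (T * 2 ^ α) * L ^ α := by
            rw [Real.mul_rpow (by norm_num) hL0]; ring
          rw [he]
          have h1 : 0 ≤ L ^ α := Real.rpow_nonneg hL0 α
          have h2 : 0 ≤ T ^ α := Real.rpow_nonneg hT.le α
          nlinarith [mul_nonneg (mul_nonneg hM h2) h1, h1]
        · refine le_trans (measure_mono (subset_univ _)) ?_
          rw [← ENNReal.ofReal_toReal (measure_ne_top μ univ)]
          refine ENNReal.ofReal_le_ofReal ?_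
          have h1 : (1 : ℝ) ≤ (T * L) ^ α := by
            refine Real.one_le_rpow ?_ hα0.le
            calc (1 : ℝ) = T * (1 / T) := by field_simp
              _ ≤ T * L := by
                  exact mul_le_mul_of_nonneg_left hLδ hT.le
          have h2 : (T * L) ^ α = T ^ α * L ^ α := Real.mul_rpow hT.le hL0
          have h3 : 0 ≤ L ^ α := Real.rpow_nonneg hL0 α
          have h4 : 0 ≤ T ^ α := Real.rpow_nonneg hT.le α
          have h5 : 0 ≤ (2:ℝ) ^ α := Real.rpow_nonneg (by norm_num) α
          have h6 : M * 1 ≤ M * ((T * L) ^ α) := mul_le_mul_of_nonneg_left h1 hM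
          nlinarith [h6, h2, mul_nonneg (mul_nonneg hT.le h5) h3, h3]
      · rw [not_nonempty_iff_eq_empty.1 hne]
        simp
    · rw [Measure.restrict_apply_univ]
      exact hn
  · intro h A hAmeas hA0
    refine le_antisymm ?_ zero_le
    have key : ∀ ε : ℝ, 0 < ε → μ A ≤ ENNReal.ofReal ε := by
      intro ε hε
      obtain ⟨μ₁, μ₂, _, _, hsing, hsum, ⟨C, hC, hH⟩, hsmall⟩ := h ε hε
      have h1 : μ₁ A = 0 := holder_null hα0 μ₁ hC hH hA0
      calc μ A = μ₁ A + μ₂ A := by rw [hsum, Measure.add_apply]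
        _ = μ₂ A := by rw [h1, zero_add]
        _ ≤ μ₂ univ := measure_mono (subset_univ _)
        _ ≤ ENNReal.ofReal ε := hsmall.le
    have tlim : Tendsto (fun n : ℕ => ENNReal.ofReal (1 / ((n : ℝ) + 1))) atTop (𝓝 0) := by
      have := (ENNReal.continuous_ofReal.tendsto 0).comp (tendsto_one_div_add_atTop_nhds_zero_nat (𝕜 := ℝ))
      simpa [Function.comp_def] using this
    exact ge_of_tendsto' tlim (fun k => key _ (by positivity))
end
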